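/- arXiv:2510.00530 — 7 statements merged into one kernel-verified Lean document; each statement's English description precedes it below -/
import Mathlib

section
/- Let G be a finite simple graph, let u and v be vertices of G at graph distance d ≥ 1, let r be a nonnegative integer, and let S be a distance-r resolving set of G. Then |S| · (2r + 1) ≥ d. (Consequently, th_dim(G) = Ω(√d) for graphs of diameter d.) -/
open SimpleGraph Filter

/-- The `r`-truncated distance between vertices: `min(d(u,v), r+1)`. -/
noncomputable def truncDist {V : Type*} (G : SimpleGraph V) (r : ℕ) (u v : V) : ℕ∞ :=
  min (G.edist u v) (r + 1)

/-- `S` is a distance-`r` resolving set of `G`. -/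
def IsDistResolving {V : Type*} (G : SimpleGraph V) (r : ℕ) (S : Finset V) : Prop :=
  ∀ x y : V, x ≠ y → ∃ v ∈ S, truncDist G r v x ≠ truncDist G r v y

/-- The `r`-truncated metric dimension of `G`. -/
noncomputable def dimr {V : Type*} (G : SimpleGraph V) (r : ℕ) : ℕ :=
  sInf {k | ∃ S : Finset V, IsDistResolving G r S ∧ S.card = k}

/-- The metric dimension throttling number of `G`. -/
noncomputable def thDim {V : Type*} (G : SimpleGraph V) : ℕ :=
  sInf {m | ∃ r : ℕ, m = r + dimr G r}

/-- `S` is a resolving set of `G` (untruncated distances). -/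
def IsResolving {V : Type*} (G : SimpleGraph V) (S : Finset V) : Prop :=
  ∀ x y : V, x ≠ y → ∃ v ∈ S, G.edist v x ≠ G.edist v y

/-- The metric dimension of `G`. -/
noncomputable def metricDim {V : Type*} (G : SimpleGraph V) : ℕ :=
  sInf {k | ∃ S : Finset V, IsResolving G S ∧ S.card = k}

/-- Distance from an edge (as an unordered pair `{u,w}`) to a vertex:
`min(d(u,v), d(w,v))`. -/
noncomputable def edgeEDist {V : Type*} (G : SimpleGraph V) (e : Sym2 V) (v : V) : ℕ∞ :=
  Sym2.lift ⟨fun a b => min (G.edist a v) (G.edist b v), fun _ _ => min_comm _ _⟩ e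

/-- The `r`-truncated distance from an edge to a vertex. -/
noncomputable def truncEdgeDist {V : Type*} (G : SimpleGraph V) (r : ℕ) (e : Sym2 V)
    (v : V) : ℕ∞ :=
  min (edgeEDist G e v) (r + 1)

/-- `S` is a distance-`r` edge resolving set of `G`. -/
def IsEdgeResolving {V : Type*} (G : SimpleGraph V) (r : ℕ) (S : Finset V) : Prop :=
  ∀ e ∈ G.edgeSet, ∀ f ∈ G.edgeSet, e ≠ f →
    ∃ v ∈ S, truncEdgeDist G r e v ≠ truncEdgeDist G r f v

/-- The `r`-truncated edge metric dimension of `G`. -/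
noncomputable def edimr {V : Type*} (G : SimpleGraph V) (r : ℕ) : ℕ :=
  sInf {k | ∃ S : Finset V, IsEdgeResolving G r S ∧ S.card = k}

/-- The edge metric dimension throttling number of `G`. -/
noncomputable def thEdim {V : Type*} (G : SimpleGraph V) : ℕ :=
  sInf {m | ∃ r : ℕ, m = r + edimr G r}

/-- An item of `G` is a vertex or an edge; distance from an item to a vertex. -/
noncomputable def itemEDist {V : Type*} (G : SimpleGraph V) : V ⊕ G.edgeSet → V → ℕ∞
  | Sum.inl u, v => G.edist u v
  | Sum.inr e, v => edgeEDist G (e : Sym2 V) v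

/-- The `r`-truncated distance from an item to a vertex. -/
noncomputable def truncItemDist {V : Type*} (G : SimpleGraph V) (r : ℕ)
    (t : V ⊕ G.edgeSet) (v : V) : ℕ∞ :=
  min (itemEDist G t v) (r + 1)

/-- `S` is a distance-`r` mixed resolving set of `G`. -/
def IsMixedResolving {V : Type*} (G : SimpleGraph V) (r : ℕ) (S : Finset V) : Prop :=
  ∀ t₁ t₂ : V ⊕ G.edgeSet, t₁ ≠ t₂ →
    ∃ v ∈ S, truncItemDist G r t₁ v ≠ truncItemDist G r t₂ v

/-- The `r`-truncated mixed metric dimension of `G`. -/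
noncomputable def mdimr {V : Type*} (G : SimpleGraph V) (r : ℕ) : ℕ :=
  sInf {k | ∃ S : Finset V, IsMixedResolving G r S ∧ S.card = k}

/-- The mixed metric dimension throttling number of `G`. -/
noncomputable def thMdim {V : Type*} (G : SimpleGraph V) : ℕ :=
  sInf {m | ∃ r : ℕ, m = r + mdimr G r}

/-- `S` is a mixed resolving set of `G` (untruncated distances). -/
def IsMixedResolvingSet {V : Type*} (G : SimpleGraph V) (S : Finset V) : Prop :=
  ∀ t₁ t₂ : V ⊕ G.edgeSet, t₁ ≠ t₂ → ∃ v ∈ S, itemEDist G t₁ v ≠ itemEDist G t₂ v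

/-- The mixed metric dimension of `G`. -/
noncomputable def mixedDim {V : Type*} (G : SimpleGraph V) : ℕ :=
  sInf {k | ∃ S : Finset V, IsMixedResolvingSet G S ∧ S.card = k}

private lemma getVert_edist_le {V : Type*} {G : SimpleGraph V} {a b : V} (p : G.Walk a b)
    (i k : ℕ) : G.edist (p.getVert i) (p.getVert (i + k)) ≤ (k : ℕ∞) := by
  induction k with
  | zero => simp
  | succ k ih =>
    by_cases h : i + k < p.length
    · calc G.edist (p.getVert i) (p.getVert (i + (k + 1)))
          ≤ G.edist (p.getVert i) (p.getVert (i + k)) +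
            G.edist (p.getVert (i + k)) (p.getVert (i + k + 1)) := by
            rw [show i + (k + 1) = i + k + 1 from rfl]; exact SimpleGraph.edist_triangle
        _ ≤ (k : ℕ∞) + 1 := by
            refine add_le_add ih (le_of_eq ?_)
            exact SimpleGraph.edist_eq_one_iff_adj.mpr (p.adj_getVert_succ h)
        _ = ((k + 1 : ℕ) : ℕ∞) := by push_cast; ring
    · push_neg at h
      rw [p.getVert_of_length_le h] at ih
      rw [show i + (k + 1) = i + k + 1 from rfl,
        p.getVert_of_length_le (h.trans (Nat.le_succ _))]
      exact ih.trans (by exact_mod_cast Nat.le_succ k)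

/-- If `u` and `v` are vertices at graph distance `d ≥ 1` and `S` is a
distance-`r` resolving set of `G`, then `|S| * (2r+1) ≥ d`. -/
theorem stmt3 {V : Type*} [Fintype V] (G : SimpleGraph V) (u v : V) (d r : ℕ)
    (hd : G.edist u v = d) (hd1 : 1 ≤ d) (S : Finset V)
    (hres : IsDistResolving G r S) :
    d ≤ S.card * (2 * r + 1) := by
  classical
  obtain ⟨p, hp⟩ := SimpleGraph.exists_walk_of_edist_eq_coe hd
  have hplen : p.length = d := hp
  set x : ℕ → V := p.getVert with hxdef
  have hx0 : x 0 = u := p.getVert_zero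
  have hxd : p.getVert d = v := by
    rw [← hplen]; exact p.getVert_length
  -- Lower bound on distances along the walk
  have hA : ∀ i j : ℕ, i ≤ j → j ≤ d → ((j - i : ℕ) : ℕ∞) ≤ G.edist (x i) (x j) := by
    intro i j hij hjd
    rcases eq_or_ne (G.edist (x i) (x j)) ⊤ with hE | hE
    · simp [hE]
    · lift G.edist (x i) (x j) to ℕ using hE with e he
      have h1 : G.edist u (x i) ≤ (i : ℕ∞) := by
        have := getVert_edist_le p 0 i; simpa [hx0] using this
      have h2 : G.edist (x j) v ≤ ((d - j : ℕ) : ℕ∞) := by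
        have h := getVert_edist_le p j (d - j)
        rw [show j + (d - j) = d by omega] at h
        show G.edist (p.getVert j) v ≤ ((d - j : ℕ) : ℕ∞)
        rwa [hxd] at h
      have h3 : G.edist u v ≤ G.edist u (x i) + G.edist (x i) (x j) + G.edist (x j) v := by
        calc G.edist u v ≤ G.edist u (x j) + G.edist (x j) v := SimpleGraph.edist_triangle
          _ ≤ (G.edist u (x i) + G.edist (x i) (x j)) + G.edist (x j) v :=
            add_le_add SimpleGraph.edist_triangle le_rfl
      rw [hd] at h3
      have h4 : (d : ℕ∞) ≤ (i : ℕ∞) + (e : ℕ∞) + ((d - j : ℕ) : ℕ∞) := by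
        refine h3.trans ?_
        rw [he]
        exact add_le_add (add_le_add h1 le_rfl) h2
      have h5 : d ≤ i + e + (d - j) := by exact_mod_cast h4
      exact_mod_cast (by omega : j - i ≤ e)
  -- Injectivity on {0,...,d}
  have hinj : ∀ i j : ℕ, i ≤ d → j ≤ d → i ≠ j → x i ≠ x j := by
    intro i j hi hj hij hxeq
    rcases Nat.lt_or_ge i j with h | h
    · have := hA i j h.le hj
      rw [hxeq, SimpleGraph.edist_self] at this
      have : j - i = 0 := by exact_mod_cast nonpos_iff_eq_zero.mp this
      omega
    · have h' : j < i := by omega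
      have := hA j i h'.le hi
      rw [hxeq, SimpleGraph.edist_self] at this
      have : i - j = 0 := by exact_mod_cast nonpos_iff_eq_zero.mp this
      omega
  -- Cover sets
  set C : V → Finset ℕ := fun s =>
    (Finset.range (d + 1)).filter (fun i => G.edist s (x i) ≤ (r : ℕ∞)) with hC
  have hCcard : ∀ s : V, (C s).card ≤ 2 * r + 1 := by
    intro s
    rcases (C s).eq_empty_or_nonempty with h | h
    · simp [h]
    · have hsub : C s ⊆ Finset.Icc ((C s).min' h) ((C s).min' h + 2 * r) := by
        intro i hi
        set m := (C s).min' h with hm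
        have hmi : m ≤ i := Finset.min'_le _ _ hi
        have hmem : m ∈ C s := Finset.min'_mem _ _
        simp only [hC, Finset.mem_filter, Finset.mem_range] at hi hmem
        have h1 : ((i - m : ℕ) : ℕ∞) ≤ G.edist (x m) (x i) := hA m i hmi (by omega)
        have h2 : G.edist (x m) (x i) ≤ G.edist (x m) s + G.edist s (x i) :=
          SimpleGraph.edist_triangle
        have h3 : G.edist (x m) s ≤ (r : ℕ∞) := by rw [SimpleGraph.edist_comm]; exact hmem.2
        have h4 : ((i - m : ℕ) : ℕ∞) ≤ ((r + r : ℕ) : ℕ∞) := by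
          refine h1.trans (h2.trans ?_)
          rw [Nat.cast_add]
          exact add_le_add h3 hi.2
        have : i - m ≤ r + r := by exact_mod_cast h4
        simp only [Finset.mem_Icc]
        omega
      calc (C s).card ≤ _ := Finset.card_le_card hsub
        _ = 2 * r + 1 := by rw [Nat.card_Icc]; omega
  -- Uncovered indices: at most one
  set U : Finset ℕ :=
    (Finset.range (d + 1)).filter (fun i => ∀ s ∈ S, ¬ G.edist s (x i) ≤ (r : ℕ∞)) with hU
  have hUcard : U.card ≤ 1 := by
    refine Finset.card_le_one.mpr ?_
    intro i hi j hj
    by_contra hij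
    simp only [hU, Finset.mem_filter, Finset.mem_range] at hi hj
    have hne : x i ≠ x j := hinj i j (by omega) (by omega) hij
    obtain ⟨s, hs, hsd⟩ := hres (x i) (x j) hne
    have e1 : truncDist G r s (x i) = ((r : ℕ∞) + 1) := by
      unfold truncDist
      refine min_eq_right ?_
      have := hi.2 s hs
      exact ENat.add_one_le_iff (by simp) |>.mpr (lt_of_not_ge this)
    have e2 : truncDist G r s (x j) = ((r : ℕ∞) + 1) := by
      unfold truncDist
      refine min_eq_right ?_
      have := hj.2 s hs
      exact ENat.add_one_le_iff (by simp) |>.mpr (lt_of_not_ge this)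
    exact hsd (e1.trans e2.symm)
  -- Counting
  have hsplit : (Finset.range (d + 1)) ⊆
      U ∪ S.biUnion C := by
    intro i hi
    rcases Classical.em (∀ s ∈ S, ¬ G.edist s (x i) ≤ (r : ℕ∞)) with h | h
    · exact Finset.mem_union_left _ (Finset.mem_filter.mpr ⟨hi, h⟩)
    · push_neg at h
      obtain ⟨s, hs, hle⟩ := h
      exact Finset.mem_union_right _
        (Finset.mem_biUnion.mpr ⟨s, hs, Finset.mem_filter.mpr ⟨hi, hle⟩⟩)
  have hcount : d + 1 ≤ U.card + (S.biUnion C).card := by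
    calc d + 1 = (Finset.range (d + 1)).card := by simp
      _ ≤ (U ∪ S.biUnion C).card := Finset.card_le_card hsplit
      _ ≤ U.card + (S.biUnion C).card := Finset.card_union_le _ _
  have hbi : (S.biUnion C).card ≤ S.card * (2 * r + 1) := by
    calc (S.biUnion C).card ≤ ∑ s ∈ S, (C s).card := Finset.card_biUnion_le
      _ ≤ ∑ _s ∈ S, (2 * r + 1) := Finset.sum_le_sum (fun s _ => hCcard s)
      _ = S.card * (2 * r + 1) := by rw [Finset.sum_const, smul_eq_mul]
  omega
end

section
/- Let G be a finite tree (a finite connected acyclic simple graph) and let W be a nonempty set of vertices of G such that the induced subgraph G[W] is connected (so G[W] is a subtree of G). Then th_dim(G[W]) ≤ th_dim(G). -/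
open SimpleGraph Filter

section Aux

variable {V : Type*} {G : SimpleGraph V} {W : Set V}

/-- A walk in `G` whose support lies in `W` lifts to a walk of the same length in the
induced subgraph. -/
lemma lift_walk : ∀ {u v : V} (q : G.Walk u v) (hu : u ∈ W) (hv : v ∈ W),
    (∀ x ∈ q.support, x ∈ W) →
    ∃ q' : (G.induce W).Walk ⟨u, hu⟩ ⟨v, hv⟩, q'.length = q.length := by
  intro u v q
  induction q with
  | nil => intro hu hv _; exact ⟨.nil, rfl⟩
  | @cons a b c h p ih =>
    intro hu hv hs
    have hb : b ∈ W := hs b (by simp)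
    obtain ⟨q', hq'⟩ := ih hb hv (fun x hx => hs x (by simp [hx]))
    exact ⟨Walk.cons (by simpa using h) q', by simp [hq']⟩

/-- In an acyclic graph, every path realizes the extended distance. -/
lemma path_length_eq (hGa : G.IsAcyclic) {u v : V} (p : G.Walk u v) (hp : p.IsPath) :
    G.edist u v = p.length := by
  classical
  have hr : G.Reachable u v := ⟨p⟩
  obtain ⟨q, hq⟩ := hr.exists_walk_length_eq_edist
  have huniq := (isAcyclic_iff_path_unique.mp hGa) ⟨p, hp⟩ q.toPath
  have hle : G.edist u v ≤ p.length := Walk.edist_le p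
  have h2 : p.length ≤ q.length := by
    have hpq : p = q.toPath.1 := congrArg Subtype.val huniq
    rw [hpq]
    exact Walk.length_bypass_le q
  refine le_antisymm hle ?_
  calc (p.length : ℕ∞) ≤ q.length := by exact_mod_cast h2
    _ = G.edist u v := hq

/-- Appending two paths that only share the junction vertex yields a path. -/
lemma append_isPath {u w x : V} (q : G.Walk u w) (R : G.Walk w x)
    (hq : q.IsPath) (hR : R.IsPath)
    (hj : ∀ y ∈ q.support, y ∈ R.support → y = w) : (q.append R).IsPath := by
  rw [Walk.isPath_def, Walk.support_append, List.nodup_append]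
  refine ⟨hq.support_nodup, ?_, ?_⟩
  · have := hR.support_nodup
    rw [R.support_eq_cons] at this
    exact this.of_cons
  · intro y hy z hy' hyz; subst hyz
    have hyR : y ∈ R.support := by
      rw [R.support_eq_cons]; exact List.mem_cons_of_mem _ hy'
    have : y = w := hj y hy hyR
    subst this
    have := hR.support_nodup
    rw [R.support_eq_cons] at this
    exact this.notMem hy'

/-- In a tree with a connected induced subgraph on `W`, there is a path between two vertices
of `W` staying in `W` and realizing the distance; moreover the induced distance agrees. -/
lemma key_lemma (hGc : G.Connected) (hGa : G.IsAcyclic) (hWc : (G.induce W).Connected)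
    (a b : ↥W) :
    (G.induce W).edist a b = G.edist ↑a ↑b ∧
    ∃ p : G.Walk ↑a ↑b, p.IsPath ∧ (∀ x ∈ p.support, x ∈ W) ∧
      (p.length : ℕ∞) = G.edist ↑a ↑b := by
  classical
  obtain ⟨r⟩ := hWc.preconnected a b
  let m : G.Walk ↑a ↑b := r.map (Embedding.induce W).toHom
  have hmsupp : ∀ x ∈ m.support, x ∈ W := by
    intro x hx
    rw [show m.support = r.support.map (Embedding.induce W).toHom from Walk.support_map _ _] at hx
    obtain ⟨y, _, rfl⟩ := List.mem_map.mp hx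
    exact y.2
  have hP : m.toPath.1.IsPath := m.toPath.2
  have hPsupp : ∀ x ∈ m.toPath.1.support, x ∈ W :=
    fun x hx => hmsupp x (Walk.support_toPath_subset m hx)
  have hPlen : (m.toPath.1.length : ℕ∞) = G.edist ↑a ↑b :=
    (path_length_eq hGa _ hP).symm
  constructor
  · refine le_antisymm ?_ ?_
    · obtain ⟨q', hq'⟩ := lift_walk m.toPath.1 a.2 b.2 hPsupp
      calc (G.induce W).edist a b ≤ q'.length := Walk.edist_le q'
        _ = G.edist ↑a ↑b := by rw [hq', hPlen]
    · obtain ⟨r0, hr0⟩ := (hWc.preconnected a b).exists_walk_length_eq_edist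
      calc G.edist ↑a ↑b ≤ (r0.map (Embedding.induce W).toHom).length :=
            Walk.edist_le _
        _ = (G.induce W).edist a b := by rw [Walk.length_map]; exact hr0
  · exact ⟨m.toPath.1, hP, hPsupp, hPlen⟩

/-- Extract the first vertex of a path lying in `W`, together with the prefix path. -/
lemma exists_prefix : ∀ {s x : V} (p : G.Walk s x), p.IsPath → x ∈ W →
    ∃ w, ∃ _ : w ∈ W, ∃ q : G.Walk s w, q.IsPath ∧
      (∀ u ∈ q.support, u ∈ W → u = w) ∧ q.support ⊆ p.support := by
  intro s x p
  induction p with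
  | nil =>
    intro _ hx
    exact ⟨_, hx, Walk.nil, by simp, by simp, by simp⟩
  | @cons a b c h p ih =>
    intro hp hx
    by_cases ha : a ∈ W
    · exact ⟨a, ha, .nil, by simp, by simp, by simp⟩
    · rw [Walk.cons_isPath_iff] at hp
      obtain ⟨w, hw, q, hq, hqw, hqs⟩ := ih hp.1 hx
      refine ⟨w, hw, Walk.cons h q, ?_, ?_, ?_⟩
      · exact hq.cons (fun hmem => hp.2 (hqs hmem))
      · intro u hu huW
        rw [Walk.support_cons, List.mem_cons] at hu
        rcases hu with rfl | hu
        · exact absurd huW ha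
        · exact hqw u hu huW
      · intro u hu
        rw [Walk.support_cons, List.mem_cons] at hu
        rw [Walk.support_cons, List.mem_cons]
        rcases hu with rfl | hu
        · exact Or.inl rfl
        · exact Or.inr (hqs hu)

/-- Every vertex of a tree has a gate into a connected subset `W`. -/
lemma exists_gate (hGc : G.Connected) (hGa : G.IsAcyclic) (hW : W.Nonempty)
    (hWc : (G.induce W).Connected) (s : V) :
    ∃ w : ↥W, ∀ x : ↥W, G.edist s ↑x = G.edist s ↑w + G.edist (↑w : V) ↑x := by
  classical
  obtain ⟨x0, hx0⟩ := hW
  obtain ⟨p0⟩ := hGc.preconnected s x0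
  obtain ⟨w, hw, q, hq, hqw, -⟩ := exists_prefix p0.toPath.1 p0.toPath.2 hx0
  refine ⟨⟨w, hw⟩, fun x => ?_⟩
  obtain ⟨-, R, hR, hRsupp, hRlen⟩ := key_lemma hGc hGa hWc ⟨w, hw⟩ x
  have happ : (q.append R).IsPath :=
    append_isPath q R hq hR (fun y hy hy' => hqw y hy (hRsupp y hy'))
  have h1 : G.edist s ↑x = (q.append R).length := path_length_eq hGa _ happ
  have h2 : G.edist s w = q.length := path_length_eq hGa q hq
  rw [h1, Walk.length_append, Nat.cast_add, h2, hRlen]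

end Aux

section Aux2
variable {V : Type*} {G : SimpleGraph V} {W : Set V}

lemma min_trunc_nat {a dx dy r : ℕ} (h : min dx (r+1) = min dy (r+1)) :
    min (a+dx) (r+1) = min (a+dy) (r+1) := by omega

lemma enat_cast_min {m n : ℕ} : ((min m n : ℕ) : ℕ∞) = min (m : ℕ∞) n :=
  WithTop.coe_min m n

lemma univ_resolving [Fintype V] (r : ℕ) : IsDistResolving G r Finset.univ := by
  intro x y hxy
  refine ⟨x, Finset.mem_univ x, ?_⟩
  have h1 : truncDist G r x x = 0 := by simp [truncDist, edist_self]
  have h2 : truncDist G r x y ≠ 0 := by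
    have := G.edist_pos_of_ne hxy
    simp only [truncDist, ne_eq, ← pos_iff_ne_zero, lt_min_iff]
    exact ⟨this, lt_of_lt_of_le zero_lt_one le_add_self⟩
  rw [h1]
  exact fun h => h2 h.symm

lemma dimr_le [Fintype V] (hGc : G.Connected) (hGa : G.IsAcyclic) (hW : W.Nonempty)
    (hWc : (G.induce W).Connected) (r : ℕ) :
    dimr (G.induce W) r ≤ dimr G r := by
  classical
  have hne : {k | ∃ S : Finset V, IsDistResolving G r S ∧ S.card = k}.Nonempty :=
    ⟨Finset.univ.card, Finset.univ, univ_resolving r, rfl⟩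
  obtain ⟨S, hS, hcard⟩ := Nat.sInf_mem hne
  choose gate hgate using fun s => exists_gate hGc hGa hW hWc s
  have hed : ∀ (a b : ↥W), (G.induce W).edist a b = G.edist ↑a ↑b :=
    fun a b => (key_lemma hGc hGa hWc a b).1
  have hfin : ∀ u v : V, G.edist u v ≠ ⊤ :=
    fun u v => edist_ne_top_iff_reachable.mpr (hGc.preconnected u v)
  set T : Finset ↥W := S.image gate with hT
  have hTres : IsDistResolving (G.induce W) r T := by
    intro x y hxy
    obtain ⟨s, hs, hne'⟩ := hS ↑x ↑y (fun h => hxy (Subtype.ext h))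
    refine ⟨gate s, Finset.mem_image_of_mem _ hs, ?_⟩
    intro heq
    apply hne'
    unfold truncDist at heq ⊢
    rw [hed] at heq
    rw [hed] at heq
    rw [hgate s x, hgate s y]
    have ha := hfin s ↑(gate s)
    have hdx := hfin (↑(gate s)) ↑x
    have hdy := hfin (↑(gate s)) ↑y
    lift G.edist s ↑(gate s) to ℕ using ha with a
    lift G.edist (↑(gate s)) ↑x to ℕ using hdx with dx
    lift G.edist (↑(gate s)) ↑y to ℕ using hdy with dy
    have hcast : ((r : ℕ∞) + 1) = ((r+1 : ℕ) : ℕ∞) := by push_cast; ring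
    rw [hcast, ← Nat.cast_add, ← Nat.cast_add, ← enat_cast_min, ← enat_cast_min]
    rw [hcast, ← enat_cast_min, ← enat_cast_min] at heq
    rw [Nat.cast_inj] at heq ⊢
    exact min_trunc_nat heq
  calc dimr (G.induce W) r ≤ T.card := Nat.sInf_le ⟨T, hTres, rfl⟩
    _ ≤ S.card := Finset.card_image_le
    _ = dimr G r := hcard

end Aux2

/-- If `G` is a finite tree and `W` is a nonempty set of vertices whose
induced subgraph is connected (a subtree), then `th_dim(G[W]) ≤ th_dim(G)`. -/
theorem stmt6 {V : Type*} [Fintype V] (G : SimpleGraph V)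
    (hGc : G.Connected) (hGa : G.IsAcyclic) (W : Set V)
    (hW : W.Nonempty) (hWc : (G.induce W).Connected) :
    thDim (G.induce W) ≤ thDim G := by
  have hdim : ∀ r, dimr (G.induce W) r ≤ dimr G r := dimr_le hGc hGa hW hWc
  have hne : {m | ∃ r : ℕ, m = r + dimr G r}.Nonempty := ⟨0 + dimr G 0, 0, rfl⟩
  obtain ⟨r, hr0⟩ := Nat.sInf_mem hne
  calc thDim (G.induce W) ≤ r + dimr (G.induce W) r := Nat.sInf_le ⟨r, rfl⟩
    _ ≤ r + dimr G r := Nat.add_le_add_left (hdim r) r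
    _ = thDim G := hr0.symm
end

section
/- For all positive integers s and t, the metric dimension throttling number of the complete bipartite graph K_{s,t} satisfies th_dim(K_{s,t}) = s + t − 1. -/
open SimpleGraph Filter

section Aux

variable {s t : ℕ}

private lemma enat_eq_two (d : ℕ∞) (h0 : d ≠ 0) (h1 : d ≠ 1) (h2 : d ≤ 2) : d = 2 := by
  cases d using ENat.recTopCoe
  · simp at h2
  · norm_cast at *; omega

private lemma edist_cross (a : Fin s) (b : Fin t) :
    (completeBipartiteGraph (Fin s) (Fin t)).edist (Sum.inr b) (Sum.inl a) = 1 := by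
  rw [edist_eq_one_iff_adj]; simp

private lemma edist_inl_inl (ht : 1 ≤ t) {a b : Fin s} (hab : a ≠ b) :
    (completeBipartiteGraph (Fin s) (Fin t)).edist (Sum.inl a) (Sum.inl b) = 2 := by
  apply enat_eq_two
  · simp only [ne_eq, SimpleGraph.edist_eq_zero_iff]
    simp [hab]
  · simp only [ne_eq, SimpleGraph.edist_eq_one_iff_adj]
    simp [completeBipartiteGraph]
  · calc (completeBipartiteGraph (Fin s) (Fin t)).edist (Sum.inl a) (Sum.inl b)
        ≤ (completeBipartiteGraph (Fin s) (Fin t)).edist (Sum.inl a) (Sum.inr ⟨0, ht⟩)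
            + (completeBipartiteGraph (Fin s) (Fin t)).edist (Sum.inr ⟨0, ht⟩) (Sum.inl b) :=
          SimpleGraph.edist_triangle
      _ = 2 := by
          rw [SimpleGraph.edist_comm (u := Sum.inl a), edist_cross, edist_cross,
            one_add_one_eq_two]

private lemma edist_inr_inr (hs : 1 ≤ s) {a b : Fin t} (hab : a ≠ b) :
    (completeBipartiteGraph (Fin s) (Fin t)).edist (Sum.inr a) (Sum.inr b) = 2 := by
  apply enat_eq_two
  · simp only [ne_eq, SimpleGraph.edist_eq_zero_iff]
    simp [hab]
  · simp only [ne_eq, SimpleGraph.edist_eq_one_iff_adj]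
    simp [completeBipartiteGraph]
  · calc (completeBipartiteGraph (Fin s) (Fin t)).edist (Sum.inr a) (Sum.inr b)
        ≤ (completeBipartiteGraph (Fin s) (Fin t)).edist (Sum.inr a) (Sum.inl ⟨0, hs⟩)
            + (completeBipartiteGraph (Fin s) (Fin t)).edist (Sum.inl ⟨0, hs⟩) (Sum.inr b) :=
          SimpleGraph.edist_triangle
      _ = 2 := by
          rw [edist_cross, SimpleGraph.edist_comm (u := Sum.inl (⟨0, hs⟩ : Fin s)),
            edist_cross, one_add_one_eq_two]

private lemma key_left (ht : 1 ≤ t) {a b : Fin s} (hab : a ≠ b)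
    (v : Fin s ⊕ Fin t) (hva : v ≠ Sum.inl a) (hvb : v ≠ Sum.inl b) :
    (completeBipartiteGraph (Fin s) (Fin t)).edist v (Sum.inl a)
      = (completeBipartiteGraph (Fin s) (Fin t)).edist v (Sum.inl b) := by
  cases v with
  | inl c =>
      have hca : c ≠ a := fun h => hva (by rw [h])
      have hcb : c ≠ b := fun h => hvb (by rw [h])
      rw [edist_inl_inl ht hca, edist_inl_inl ht hcb]
  | inr c => rw [edist_cross, edist_cross]

private lemma key_right (hs : 1 ≤ s) {a b : Fin t} (hab : a ≠ b)
    (v : Fin s ⊕ Fin t) (hva : v ≠ Sum.inr a) (hvb : v ≠ Sum.inr b) :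
    (completeBipartiteGraph (Fin s) (Fin t)).edist v (Sum.inr a)
      = (completeBipartiteGraph (Fin s) (Fin t)).edist v (Sum.inr b) := by
  cases v with
  | inl c =>
      rw [edist_comm, edist_cross, edist_comm, edist_cross]
  | inr c =>
      have hca : c ≠ a := fun h => hva (by rw [h])
      have hcb : c ≠ b := fun h => hvb (by rw [h])
      rw [edist_inr_inr hs hca, edist_inr_inr hs hcb]

-- the full vertex set always resolves
private lemma univ_resolving_s8 (hs : 1 ≤ s) (ht : 1 ≤ t) (r : ℕ) :
    IsDistResolving (completeBipartiteGraph (Fin s) (Fin t)) r Finset.univ := by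
  intro x y hxy
  refine ⟨x, Finset.mem_univ x, ?_⟩
  have h1 : truncDist (completeBipartiteGraph (Fin s) (Fin t)) r x x = 0 := by
    simp [truncDist, SimpleGraph.edist_self]
  have h2 : 0 < truncDist (completeBipartiteGraph (Fin s) (Fin t)) r x y := by
    rw [truncDist]
    apply lt_min
    · exact pos_iff_ne_zero.mpr fun h => hxy (SimpleGraph.edist_eq_zero_iff.mp h)
    · exact_mod_cast Nat.succ_pos r
  rw [h1]; exact fun h => h2.ne' h.symm

-- lower bound valid for any r
private lemma lb_any (hs : 1 ≤ s) (ht : 1 ≤ t) (r : ℕ) (S : Finset (Fin s ⊕ Fin t))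
    (hS : IsDistResolving (completeBipartiteGraph (Fin s) (Fin t)) r S) :
    s + t - 2 ≤ S.card := by
  set G := completeBipartiteGraph (Fin s) (Fin t)
  set L : Finset (Fin s ⊕ Fin t) := Finset.univ.image Sum.inl with hL
  set R : Finset (Fin s ⊕ Fin t) := Finset.univ.image Sum.inr with hR
  have hLcard : L.card = s := by
    rw [hL, Finset.card_image_of_injective _ Sum.inl_injective, Finset.card_univ, Fintype.card_fin]
  have hRcard : R.card = t := by
    rw [hR, Finset.card_image_of_injective _ Sum.inr_injective, Finset.card_univ, Fintype.card_fin]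
  have hLsd : (L \ S).card ≤ 1 := by
    by_contra h
    push_neg at h
    obtain ⟨x, y, hx, hy, hxy⟩ := Finset.one_lt_card_iff.mp h
    obtain ⟨hxL, hxS⟩ := Finset.mem_sdiff.mp hx
    obtain ⟨hyL, hyS⟩ := Finset.mem_sdiff.mp hy
    obtain ⟨a, -, rfl⟩ := Finset.mem_image.mp hxL
    obtain ⟨b, -, rfl⟩ := Finset.mem_image.mp hyL
    have hab : a ≠ b := fun h => hxy (by rw [h])
    obtain ⟨v, hvS, hv⟩ := hS _ _ hxy
    have hva : v ≠ Sum.inl a := fun h => hxS (h ▸ hvS)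
    have hvb : v ≠ Sum.inl b := fun h => hyS (h ▸ hvS)
    exact hv (by rw [truncDist, truncDist, key_left ht hab v hva hvb])
  have hRsd : (R \ S).card ≤ 1 := by
    by_contra h
    push_neg at h
    obtain ⟨x, y, hx, hy, hxy⟩ := Finset.one_lt_card_iff.mp h
    obtain ⟨hxL, hxS⟩ := Finset.mem_sdiff.mp hx
    obtain ⟨hyL, hyS⟩ := Finset.mem_sdiff.mp hy
    obtain ⟨a, -, rfl⟩ := Finset.mem_image.mp hxL
    obtain ⟨b, -, rfl⟩ := Finset.mem_image.mp hyL
    have hab : a ≠ b := fun h => hxy (by rw [h])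
    obtain ⟨v, hvS, hv⟩ := hS _ _ hxy
    have hva : v ≠ Sum.inr a := fun h => hxS (h ▸ hvS)
    have hvb : v ≠ Sum.inr b := fun h => hyS (h ▸ hvS)
    exact hv (by rw [truncDist, truncDist, key_right hs hab v hva hvb])
  have hLi : (L ∩ S).card + (L \ S).card = L.card := Finset.card_inter_add_card_sdiff L S
  have hRi : (R ∩ S).card + (R \ S).card = R.card := Finset.card_inter_add_card_sdiff R S
  have hdisj : Disjoint (L ∩ S) (R ∩ S) := by
    rw [Finset.disjoint_left]
    intro x hxL hxR
    obtain ⟨a, -, rfl⟩ := Finset.mem_image.mp (Finset.mem_inter.mp hxL).1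
    obtain ⟨b, -, h⟩ := Finset.mem_image.mp (Finset.mem_inter.mp hxR).1
    exact Sum.inr_ne_inl h
  have hsub : (L ∩ S) ∪ (R ∩ S) ⊆ S := by
    intro x hx
    rcases Finset.mem_union.mp hx with h | h
    · exact (Finset.mem_inter.mp h).2
    · exact (Finset.mem_inter.mp h).2
  have := Finset.card_le_card hsub
  rw [Finset.card_union_of_disjoint hdisj] at this
  omega

private lemma card_pos_of_resolving (hs : 1 ≤ s) (ht : 1 ≤ t) (r : ℕ)
    (S : Finset (Fin s ⊕ Fin t))
    (hS : IsDistResolving (completeBipartiteGraph (Fin s) (Fin t)) r S) :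
    1 ≤ S.card := by
  obtain ⟨v, hv, -⟩ := hS (Sum.inl ⟨0, hs⟩) (Sum.inr ⟨0, ht⟩) (by simp)
  exact Finset.card_pos.mpr ⟨v, hv⟩

-- lower bound at r = 0
private lemma lb_zero (hs : 1 ≤ s) (ht : 1 ≤ t) (S : Finset (Fin s ⊕ Fin t))
    (hS : IsDistResolving (completeBipartiteGraph (Fin s) (Fin t)) 0 S) :
    s + t - 1 ≤ S.card := by
  set G := completeBipartiteGraph (Fin s) (Fin t)
  have key : (Finset.univ \ S).card ≤ 1 := by
    by_contra h
    push_neg at h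
    obtain ⟨x, y, hx, hy, hxy⟩ := Finset.one_lt_card_iff.mp h
    have hxS := (Finset.mem_sdiff.mp hx).2
    have hyS := (Finset.mem_sdiff.mp hy).2
    obtain ⟨v, hvS, hv⟩ := hS _ _ hxy
    have hvx : v ≠ x := fun h => hxS (h ▸ hvS)
    have hvy : v ≠ y := fun h => hyS (h ▸ hvS)
    apply hv
    have hx1 : truncDist G 0 v x = 1 := by
      have : (1 : ℕ∞) ≤ G.edist v x :=
        ENat.one_le_iff_ne_zero.mpr (fun h => hvx (SimpleGraph.edist_eq_zero_iff.mp h))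
      simp [truncDist, min_eq_right this]
    have hy1 : truncDist G 0 v y = 1 := by
      have : (1 : ℕ∞) ≤ G.edist v y :=
        ENat.one_le_iff_ne_zero.mpr (fun h => hvy (SimpleGraph.edist_eq_zero_iff.mp h))
      simp [truncDist, min_eq_right this]
    rw [hx1, hy1]
  have hsub : S ⊆ Finset.univ := Finset.subset_univ S
  have h1 : (Finset.univ \ S).card = Finset.univ.card - S.card := Finset.card_sdiff_of_subset hsub
  have h2 : (Finset.univ : Finset (Fin s ⊕ Fin t)).card = s + t := by
    simp [Finset.card_univ]
  have h3 : S.card ≤ Finset.univ.card := Finset.card_le_card hsub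
  omega

-- upper bound at r = 0 : all vertices but one
private lemma ub_zero (hs : 1 ≤ s) (ht : 1 ≤ t) :
    ∃ S : Finset (Fin s ⊕ Fin t),
      IsDistResolving (completeBipartiteGraph (Fin s) (Fin t)) 0 S ∧ S.card = s + t - 1 := by
  set G := completeBipartiteGraph (Fin s) (Fin t)
  set w : Fin s ⊕ Fin t := Sum.inl ⟨0, hs⟩ with hw
  refine ⟨Finset.univ.erase w, ?_, ?_⟩
  · intro x y hxy
    have resolve : ∀ v z : Fin s ⊕ Fin t, v ≠ z →
        truncDist G 0 v v ≠ truncDist G 0 v z := by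
      intro v z hvz
      have h1 : truncDist G 0 v v = 0 := by simp [truncDist, SimpleGraph.edist_self]
      have h2 : truncDist G 0 v z = 1 := by
        have : (1 : ℕ∞) ≤ G.edist v z :=
          ENat.one_le_iff_ne_zero.mpr (fun h => hvz (SimpleGraph.edist_eq_zero_iff.mp h))
        simp [truncDist, min_eq_right this]
      rw [h1, h2]; simp
    by_cases hx : x = w
    · have hyw : y ≠ w := fun h => hxy (hx.trans h.symm)
      have hy : y ∈ Finset.univ.erase w := Finset.mem_erase.mpr ⟨hyw, Finset.mem_univ y⟩
      exact ⟨y, hy, (resolve y x fun hh => hxy hh.symm).symm⟩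
    · exact ⟨x, Finset.mem_erase.mpr ⟨hx, Finset.mem_univ x⟩, resolve x y hxy⟩
  · rw [Finset.card_erase_of_mem (Finset.mem_univ w), Finset.card_univ]
    simp
end Aux

/-- For all positive integers `s, t`,
`th_dim(K_{s,t}) = s + t - 1`. -/
theorem stmt8 (s t : ℕ) (hs : 1 ≤ s) (ht : 1 ≤ t) :
    thDim (completeBipartiteGraph (Fin s) (Fin t)) = s + t - 1 := by
  set G := completeBipartiteGraph (Fin s) (Fin t)
  obtain ⟨S₀, hS₀, hS₀card⟩ := ub_zero hs ht
  have hdim0 : dimr G 0 = s + t - 1 := by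
    apply le_antisymm
    · exact Nat.sInf_le ⟨S₀, hS₀, hS₀card⟩
    · exact le_csInf ⟨s + t - 1, S₀, hS₀, hS₀card⟩
        (fun k ⟨S, hS, hcard⟩ => hcard ▸ lb_zero hs ht S hS)
  have hdimlb : ∀ r : ℕ, s + t - 2 ≤ dimr G r ∧ 1 ≤ dimr G r := by
    intro r
    have hne : {k | ∃ S : Finset (Fin s ⊕ Fin t), IsDistResolving G r S ∧ S.card = k}.Nonempty :=
      ⟨(Finset.univ : Finset (Fin s ⊕ Fin t)).card, Finset.univ, univ_resolving_s8 hs ht r, rfl⟩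
    constructor
    · exact le_csInf hne (fun k ⟨S, hS, hcard⟩ => hcard ▸ lb_any hs ht r S hS)
    · exact le_csInf hne (fun k ⟨S, hS, hcard⟩ => hcard ▸ card_pos_of_resolving hs ht r S hS)
  apply le_antisymm
  · apply Nat.sInf_le
    exact ⟨0, by rw [hdim0]; omega⟩
  · have hne : {m | ∃ r : ℕ, m = r + dimr G r}.Nonempty := ⟨0 + dimr G 0, 0, rfl⟩
    apply le_csInf hne
    rintro m ⟨r, rfl⟩
    rcases Nat.eq_zero_or_pos r with hr | hr
    · rw [hr, hdim0, Nat.zero_add]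
    · have := hdimlb r
      omega
end

section
/- Fix a positive integer ℓ and a set S ⊆ {1, …, ℓ} with 1 ∈ S and ℓ ∈ S. Then th_dim(Circ(n, S)) = Θ(√n): there exist constants c, C > 0 (depending only on ℓ and S) such that for all sufficiently large n, c·√n ≤ th_dim(Circ(n, S)) ≤ C·√n. -/
open SimpleGraph Filter

section StmtTenAux
variable {ℓ : ℕ} {S : Set ℕ}

lemma walk_disp {n : ℕ} (hS : S ⊆ Set.Icc 1 ℓ) {u x : ZMod n}
    (p : (circulantGraph ((Nat.cast : ℕ → ZMod n) '' S)).Walk u x) :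
    ∃ j : ℤ, j.natAbs ≤ p.length * ℓ ∧ x - u = (j : ZMod n) := by
  induction p with
  | nil => exact ⟨0, by simp⟩
  | @cons u v w h q ih =>
    obtain ⟨j, hj, hx⟩ := ih
    have h' := h
    rw [circulantGraph_adj] at h'
    obtain ⟨hne, hmem⟩ := h' 
    rcases hmem with ⟨a, haS, ha⟩ | ⟨a, haS, ha⟩
    · -- u - v = a, so v - u = -a
      refine ⟨j - a, ?_, ?_⟩
      · have h1 : (j - (a:ℤ)).natAbs ≤ j.natAbs + (a:ℤ).natAbs := Int.natAbs_sub_le _ _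
        have h2 : (a:ℤ).natAbs = a := Int.natAbs_natCast a
        have h3 : a ≤ ℓ := (hS haS).2
        rw [Walk.length_cons, Nat.succ_mul]
        omega
      · have : w - u = (w - v) + (v - u) := by ring
        rw [this, hx, show v - u = -(u - v) by ring, ← ha]
        push_cast
        ring
    · -- v - u = a
      refine ⟨j + a, ?_, ?_⟩
      · have h1 : (j + (a:ℤ)).natAbs ≤ j.natAbs + (a:ℤ).natAbs := Int.natAbs_add_le _ _
        have h2 : (a:ℤ).natAbs = a := Int.natAbs_natCast a
        have h3 : a ≤ ℓ := (hS haS).2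
        rw [Walk.length_cons, Nat.succ_mul]
        omega
      · have : w - u = (w - v) + (v - u) := by ring
        rw [this, hx, ← ha]
        push_cast
        ring

lemma disp_of_edist_le {n t : ℕ} (hS : S ⊆ Set.Icc 1 ℓ) {u x : ZMod n}
    (h : (circulantGraph ((Nat.cast : ℕ → ZMod n) '' S)).edist u x ≤ (t : ℕ∞)) :
    ∃ j : ℤ, j.natAbs ≤ t * ℓ ∧ x - u = (j : ZMod n) := by
  have hne : (circulantGraph ((Nat.cast : ℕ → ZMod n) '' S)).edist u x ≠ ⊤ :=
    ne_top_of_le_ne_top (by simp) h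
  obtain ⟨p, hp⟩ := SimpleGraph.exists_walk_of_edist_ne_top hne
  have hlen : p.length ≤ t := by
    rw [← hp] at h
    exact_mod_cast h
  obtain ⟨j, hj, hx⟩ := walk_disp hS p
  exact ⟨j, hj.trans (Nat.mul_le_mul_right _ hlen), hx⟩

lemma edist_add_mul_le (hℓS : ℓ ∈ S) {n : ℕ} (u : ZMod n) (t : ℕ) :
    (circulantGraph ((Nat.cast : ℕ → ZMod n) '' S)).edist u (u + ((t * ℓ : ℕ) : ZMod n))
      ≤ (t : ℕ∞) := by
  induction t with
  | zero => simp
  | succ t ih =>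
    set G := circulantGraph ((Nat.cast : ℕ → ZMod n) '' S) with hG
    have step : G.edist (u + ((t * ℓ : ℕ) : ZMod n)) (u + (((t+1) * ℓ : ℕ) : ZMod n)) ≤ 1 := by
      by_cases hz : ((ℓ : ℕ) : ZMod n) = 0
      · have heq : (((t+1) * ℓ : ℕ) : ZMod n) = ((t * ℓ : ℕ) : ZMod n) := by
          push_cast
          rw [hz]; ring
        rw [heq]
        simp
      · have hadj : G.Adj (u + ((t * ℓ : ℕ) : ZMod n)) (u + (((t+1) * ℓ : ℕ) : ZMod n)) := by
          rw [hG, circulantGraph_adj]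
          constructor
          · intro hc
            apply hz
            have h0 := add_left_cancel hc
            have h2 : (((t+1) * ℓ : ℕ) : ZMod n) - ((t * ℓ : ℕ) : ZMod n) = ((ℓ:ℕ) : ZMod n) := by
              push_cast; ring
            rw [h0] at h2
            simpa using h2.symm
          · right
            exact ⟨ℓ, hℓS, by push_cast; ring⟩
        rw [← SimpleGraph.edist_eq_one_iff_adj] at hadj
        exact le_of_eq hadj
    calc G.edist u (u + (((t+1) * ℓ : ℕ) : ZMod n))
        ≤ G.edist u (u + ((t * ℓ : ℕ) : ZMod n)) +
          G.edist (u + ((t * ℓ : ℕ) : ZMod n)) (u + (((t+1) * ℓ : ℕ) : ZMod n)) :=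
          SimpleGraph.edist_triangle
      _ ≤ (t : ℕ∞) + 1 := add_le_add ih step
      _ = ((t + 1 : ℕ) : ℕ∞) := by push_cast; ring


lemma key_lemma_s10 {n m : ℕ} [NeZero n] (hS : S ⊆ Set.Icc 1 ℓ) (hℓS : ℓ ∈ S) (hℓ1 : 1 ≤ ℓ)
    (hm : 1 ≤ m) {x y : ZMod n} (hxy : x ≠ y)
    (hd : (y - x).val + 2 * (m - 1) ≤ n - 1) :
    ∃ i s : ℕ, i ≤ (n - 1) / m ∧ s < ℓ ∧
      truncDist (circulantGraph ((Nat.cast : ℕ → ZMod n) '' S)) (m - 1)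
        (((i * m + s : ℕ) : ZMod n)) x
      < truncDist (circulantGraph ((Nat.cast : ℕ → ZMod n) '' S)) (m - 1)
        (((i * m + s : ℕ) : ZMod n)) y := by
  set G := circulantGraph ((Nat.cast : ℕ → ZMod n) '' S) with hG
  set δ := (y - x).val with hδdef
  have hδ1 : 1 ≤ δ := ZMod.val_pos.mpr (sub_ne_zero.mpr (Ne.symm hxy))
  have hnpos : 0 < n := Nat.pos_of_ne_zero (NeZero.ne n)
  set dx := x.val % m with hdxdef
  set i := x.val / m with hidef
  set t := dx / ℓ with htdef
  set s := dx % ℓ with hsdef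
  have hsℓ : s < ℓ := Nat.mod_lt _ hℓ1
  have hdx : dx < m := Nat.mod_lt _ hm
  have htℓ : t * ℓ + s = dx := by rw [Nat.mul_comm]; exact Nat.div_add_mod dx ℓ
  have hxval : x.val < n := ZMod.val_lt x
  have hi : i ≤ (n - 1) / m := Nat.div_le_div_right (by omega)
  set v : ZMod n := ((i * m + s : ℕ) : ZMod n) with hvdef
  have hxv : x = v + ((t * ℓ : ℕ) : ZMod n) := by
    have hsum : i * m + s + t * ℓ = x.val := by
      have h0 : i * m + dx = x.val := by rw [Nat.mul_comm]; exact Nat.div_add_mod x.val m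
      omega
    have : v + ((t * ℓ : ℕ) : ZMod n) = ((i * m + s + t * ℓ : ℕ) : ZMod n) := by
      rw [hvdef]; push_cast; ring
    rw [this, hsum]
    exact (ZMod.natCast_rightInverse x).symm
  have hd1 : G.edist v x ≤ (t : ℕ∞) := by
    rw [hxv]; exact edist_add_mul_le hℓS v t
  have htm : t * ℓ ≤ m - 1 := by omega
  have htr : t ≤ m - 1 := le_trans (Nat.le_mul_of_pos_right t hℓ1) htm
  have hd2 : ¬ G.edist v y ≤ (t : ℕ∞) := by
    intro hcon
    obtain ⟨j, hj, hyv⟩ := disp_of_edist_le hS hcon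
    have h2 : y - v = ((δ + t * ℓ : ℕ) : ZMod n) := by
      have hx' : x - v = ((t * ℓ : ℕ) : ZMod n) := by rw [hxv]; ring
      have hyx : y - x = ((δ : ℕ) : ZMod n) := (ZMod.natCast_rightInverse (y - x)).symm
      have : y - v = (y - x) + (x - v) := by ring
      rw [this, hyx, hx']
      push_cast; ring
    have hdvd : (n : ℤ) ∣ ((δ : ℤ) + t * ℓ - j) := by
      have : (((δ : ℤ) + t * ℓ - j : ℤ) : ZMod n) = 0 := by
        have h4 : ((δ + t * ℓ : ℕ) : ZMod n) = ((j : ℤ) : ZMod n) := by rw [← h2, hyv]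
        push_cast at h4 ⊢
        linear_combination h4
      exact (ZMod.intCast_zmod_eq_zero_iff_dvd _ _).mp this
    have hjle : (j : ℤ) ≤ (t * ℓ : ℕ) ∧ -((t * ℓ : ℕ) : ℤ) ≤ j := by
      constructor
      · calc j ≤ (j.natAbs : ℤ) := Int.le_natAbs
          _ ≤ ((t * ℓ : ℕ) : ℤ) := by exact_mod_cast hj
      · have : -(j : ℤ) ≤ (j.natAbs : ℤ) := by
          rw [← Int.natAbs_neg]; exact Int.le_natAbs
        have h2 : (j.natAbs : ℤ) ≤ ((t * ℓ : ℕ) : ℤ) := by exact_mod_cast hj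
        omega
    have hepos : 0 < (δ : ℤ) + t * ℓ - j := by
      have := hjle.1
      push_cast at this ⊢
      omega
    have hlt : (δ : ℤ) + t * ℓ - j < n := by
      have := hjle.2
      have hb : δ + 2 * (t * ℓ) ≤ n - 1 := by omega
      push_cast at this ⊢
      omega
    have := Int.le_of_dvd hepos hdvd
    omega
  have h3 : truncDist G (m - 1) v x ≤ (t : ℕ∞) := le_trans (min_le_left _ _) hd1
  have h4 : (t : ℕ∞) + 1 ≤ truncDist G (m - 1) v y := by
    apply le_min
    · exact (ENat.add_one_le_iff (by simp)).mpr (not_le.mp hd2)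
    · have : (t : ℕ∞) ≤ ((m - 1 : ℕ) : ℕ∞) := by exact_mod_cast htr
      exact add_le_add_left this 1
  refine ⟨i, s, hi, hsℓ, lt_of_le_of_lt h3 (lt_of_lt_of_le ?_ h4)⟩
  exact_mod_cast Nat.lt_succ_self t


lemma univ_resolving_s10 {n : ℕ} [NeZero n] (G : SimpleGraph (ZMod n)) (r : ℕ) :
    IsDistResolving G r Finset.univ := by
  intro x y hxy
  refine ⟨x, Finset.mem_univ x, ?_⟩
  have h1 : truncDist G r x x = 0 := by
    simp [truncDist, SimpleGraph.edist_self]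
  have h2 : (0 : ℕ∞) < truncDist G r x y := by
    exact lt_min (SimpleGraph.edist_pos_of_ne hxy)
      (lt_of_lt_of_le zero_lt_one le_add_self)
  rw [h1]
  exact h2.ne

lemma upper_bound {n : ℕ} (hS : S ⊆ Set.Icc 1 ℓ) (hℓS : ℓ ∈ S) (hℓ1 : 1 ≤ ℓ)
    (hn : 100 ≤ n) :
    thDim (circulantGraph ((Nat.cast : ℕ → ZMod n) '' S)) ≤ (Nat.sqrt n + 1) * (ℓ + 1) := by
  haveI : NeZero n := ⟨by omega⟩
  set G := circulantGraph ((Nat.cast : ℕ → ZMod n) '' S) with hG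
  set m := Nat.sqrt n + 1 with hmdef
  have hm : 1 ≤ m := by omega
  have h4m : 4 * m ≤ n := by
    have h1 : Nat.sqrt n * Nat.sqrt n ≤ n := Nat.sqrt_le' n |>.trans_eq' (by ring_nf) |>.trans_eq rfl
    have h2 : 10 ≤ Nat.sqrt n := by
      have h3 : Nat.sqrt 100 ≤ Nat.sqrt n := Nat.sqrt_le_sqrt hn
      norm_num at h3
      exact h3
    have h4 : 10 * Nat.sqrt n ≤ Nat.sqrt n * Nat.sqrt n := Nat.mul_le_mul_right _ h2
    omega
  set p := (n - 1) / m + 1 with hpdef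
  set T : Finset (ZMod n) := Finset.image (fun q : ℕ × ℕ => ((q.1 * m + q.2 : ℕ) : ZMod n))
    ((Finset.range p) ×ˢ (Finset.range ℓ)) with hTdef
  have main : ∀ x y : ZMod n, x ≠ y → (y - x).val + 2 * (m - 1) ≤ n - 1 →
      ∃ v ∈ T, truncDist G (m - 1) v x ≠ truncDist G (m - 1) v y := by
    intro x y hxy hdd
    obtain ⟨i, s, hi, hs, hlt⟩ := key_lemma_s10 hS hℓS hℓ1 hm hxy hdd
    refine ⟨((i * m + s : ℕ) : ZMod n), ?_, hlt.ne⟩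
    apply Finset.mem_image.mpr
    exact ⟨(i, s), Finset.mem_product.mpr
      ⟨Finset.mem_range.mpr (by omega), Finset.mem_range.mpr hs⟩, rfl⟩
  have hres : IsDistResolving G (m - 1) T := by
    intro x y hxy
    by_cases hc : (y - x).val + 2 * (m - 1) ≤ n - 1
    · exact main x y hxy hc
    · have hyx : (x - y).val = n - (y - x).val := by
        rw [show x - y = -(y - x) by ring, ZMod.neg_val]
        simp [sub_ne_zero.mpr (Ne.symm hxy)]
      have hval : (y - x).val < n := ZMod.val_lt _
      have hval1 : 1 ≤ (y - x).val := ZMod.val_pos.mpr (sub_ne_zero.mpr (Ne.symm hxy))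
      have hc2 : (x - y).val + 2 * (m - 1) ≤ n - 1 := by omega
      obtain ⟨v, hvT, hne⟩ := main y x (Ne.symm hxy) hc2
      exact ⟨v, hvT, hne.symm⟩
  have hTcard : T.card ≤ p * ℓ := by
    calc T.card ≤ ((Finset.range p) ×ˢ (Finset.range ℓ)).card := Finset.card_image_le
      _ = p * ℓ := by simp
  have hdim : dimr G (m - 1) ≤ T.card := Nat.sInf_le ⟨T, hres, rfl⟩
  have hth : thDim G ≤ (m - 1) + dimr G (m - 1) := Nat.sInf_le ⟨m - 1, rfl⟩
  have hp : p ≤ m := by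
    have h1 : n - 1 < m * m := by
      have h0 : n < m * m := by
        have := Nat.lt_succ_sqrt n
        simpa [hmdef, Nat.succ_eq_add_one] using this
      omega
    have h2 : (n - 1) / m < m := (Nat.div_lt_iff_lt_mul (by omega)).mpr h1
    omega
  have hfin : (m - 1) + m * ℓ ≤ m * (ℓ + 1) := by
    have : m * (ℓ + 1) = m * ℓ + m := by ring
    omega
  have hpl : p * ℓ ≤ m * ℓ := Nat.mul_le_mul_right _ hp
  calc thDim G ≤ (m - 1) + dimr G (m - 1) := hth
    _ ≤ (m - 1) + p * ℓ := by omega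
    _ ≤ (m - 1) + m * ℓ := by omega
    _ ≤ m * (ℓ + 1) := hfin

lemma count_bound {n : ℕ} [NeZero n] (hS : S ⊆ Set.Icc 1 ℓ) {r : ℕ} {T : Finset (ZMod n)}
    (hres : IsDistResolving (circulantGraph ((Nat.cast : ℕ → ZMod n) '' S)) r T) :
    n ≤ 1 + T.card * (2 * (r * ℓ) + 1) := by
  classical
  set G := circulantGraph ((Nat.cast : ℕ → ZMod n) '' S) with hG
  have hcard : ∀ v : ZMod n,
      (Finset.univ.filter (fun x : ZMod n => G.edist v x ≤ (r : ℕ∞))).card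
        ≤ 2 * (r * ℓ) + 1 := by
    intro v
    have hsub : (Finset.univ.filter (fun x : ZMod n => G.edist v x ≤ (r : ℕ∞))) ⊆
        (Finset.Icc (-((r * ℓ : ℕ) : ℤ)) ((r * ℓ : ℕ) : ℤ)).image
          (fun j : ℤ => v + (j : ZMod n)) := by
      intro x hx
      rw [Finset.mem_filter] at hx
      obtain ⟨j, hj, hxv⟩ := disp_of_edist_le hS hx.2
      apply Finset.mem_image.mpr
      refine ⟨j, Finset.mem_Icc.mpr ⟨?_, ?_⟩, by rw [← hxv]; ring⟩
      · have h1 : -(j : ℤ) ≤ (j.natAbs : ℤ) := by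
          rw [← Int.natAbs_neg]; exact Int.le_natAbs
        have h2 : (j.natAbs : ℤ) ≤ ((r * ℓ : ℕ) : ℤ) := by exact_mod_cast hj
        omega
      · have h1 := Int.le_natAbs (a := j)
        have h2 : (j.natAbs : ℤ) ≤ ((r * ℓ : ℕ) : ℤ) := by exact_mod_cast hj
        omega
    calc (Finset.univ.filter (fun x : ZMod n => G.edist v x ≤ (r : ℕ∞))).card
        ≤ ((Finset.Icc (-((r * ℓ : ℕ) : ℤ)) ((r * ℓ : ℕ) : ℤ)).image
            (fun j : ℤ => v + (j : ZMod n))).card := Finset.card_le_card hsub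
      _ ≤ (Finset.Icc (-((r * ℓ : ℕ) : ℤ)) ((r * ℓ : ℕ) : ℤ)).card := Finset.card_image_le
      _ = 2 * (r * ℓ) + 1 := by rw [Int.card_Icc]; omega
  set P : ZMod n → Prop := fun x => ∃ v ∈ T, G.edist v x ≤ (r : ℕ∞) with hP
  have hU : (Finset.univ.filter (fun x : ZMod n => ¬ P x)).card ≤ 1 := by
    rw [Finset.card_le_one]
    intro a ha b hb
    rw [Finset.mem_filter] at ha hb
    by_contra hab
    obtain ⟨v, hvT, hne⟩ := hres a b hab
    apply hne
    have key : ∀ c : ZMod n, ¬ P c → truncDist G r v c = (r : ℕ∞) + 1 := by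
      intro c hc
      apply min_eq_right
      have h0 : ¬ G.edist v c ≤ (r : ℕ∞) := fun hle => hc ⟨v, hvT, hle⟩
      exact (ENat.add_one_le_iff (by simp)).mpr (not_le.mp h0)
    rw [key a ha.2, key b hb.2]
  have hcover : (Finset.univ.filter P) ⊆
      T.biUnion (fun v => Finset.univ.filter (fun x : ZMod n => G.edist v x ≤ (r : ℕ∞))) := by
    intro x hx
    rw [Finset.mem_filter] at hx
    obtain ⟨v, hvT, hvx⟩ := hx.2
    exact Finset.mem_biUnion.mpr ⟨v, hvT, Finset.mem_filter.mpr ⟨Finset.mem_univ _, hvx⟩⟩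
  have h2 : (Finset.univ.filter P).card ≤ T.card * (2 * (r * ℓ) + 1) := by
    calc (Finset.univ.filter P).card
        ≤ (T.biUnion (fun v => Finset.univ.filter
            (fun x : ZMod n => G.edist v x ≤ (r : ℕ∞)))).card := Finset.card_le_card hcover
      _ ≤ ∑ v ∈ T, (Finset.univ.filter (fun x : ZMod n => G.edist v x ≤ (r : ℕ∞))).card :=
          Finset.card_biUnion_le
      _ ≤ T.card * (2 * (r * ℓ) + 1) := by
          have := Finset.sum_le_card_nsmul T _ (2 * (r * ℓ) + 1) (fun v _ => hcard v)
          simpa [smul_eq_mul] using this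
  have h3 := Finset.card_filter_add_card_filter_not (s := (Finset.univ : Finset (ZMod n))) P
  have h4 : (Finset.univ : Finset (ZMod n)).card = n := by
    rw [Finset.card_univ, ZMod.card]
  omega


end StmtTenAux

/-- For a fixed `ℓ ≥ 1` and `S ⊆ {1,…,ℓ}` with `1 ∈ S` and `ℓ ∈ S`,
`th_dim(Circ(n,S)) = Θ(√n)`. -/
theorem stmt10 (ℓ : ℕ) (hℓ1 : 1 ≤ ℓ) (S : Set ℕ) (hS : S ⊆ Set.Icc 1 ℓ)
    (h1 : 1 ∈ S) (hℓ : ℓ ∈ S) :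
    ∃ c C : ℝ, 0 < c ∧ 0 < C ∧ ∃ N : ℕ, ∀ n : ℕ, N ≤ n →
      c * Real.sqrt n ≤ (thDim (circulantGraph ((Nat.cast : ℕ → ZMod n) '' S)) : ℝ) ∧
      (thDim (circulantGraph ((Nat.cast : ℕ → ZMod n) '' S)) : ℝ) ≤ C * Real.sqrt n := by
  have hLpos : (0:ℝ) < (ℓ:ℝ) := by exact_mod_cast hℓ1
  refine ⟨1 / (4 * (ℓ:ℝ)), 2 * ((ℓ:ℝ) + 1), by positivity, by positivity, 100, fun n hn => ?_⟩
  haveI : NeZero n := ⟨by omega⟩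
  set G := circulantGraph ((Nat.cast : ℕ → ZMod n) '' S) with hG
  have hnR : (100:ℝ) ≤ (n:ℝ) := by exact_mod_cast hn
  set s := Real.sqrt n with hsdef
  have hss : s * s = (n:ℝ) := Real.mul_self_sqrt (by positivity)
  have hs10 : (10:ℝ) ≤ s := by
    have h100 : (10:ℝ) = Real.sqrt 100 := by
      rw [show (100:ℝ) = 10^2 by norm_num, Real.sqrt_sq (by norm_num)]
    rw [h100]
    exact Real.sqrt_le_sqrt hnR
  set L := (ℓ:ℝ) with hLdef
  have hL : (1:ℝ) ≤ L := by rw [hLdef]; exact_mod_cast hℓ1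
  constructor
  · -- lower bound
    have hne1 : {m | ∃ r : ℕ, m = r + dimr G r}.Nonempty := ⟨0 + dimr G 0, 0, rfl⟩
    obtain ⟨r0, hr0⟩ := Nat.sInf_mem hne1
    have hth : thDim G = r0 + dimr G r0 := hr0
    have hne2 : {k | ∃ T : Finset (ZMod n), IsDistResolving G r0 T ∧ T.card = k}.Nonempty :=
      ⟨Finset.univ.card, Finset.univ, univ_resolving_s10 G r0, rfl⟩
    obtain ⟨T0, hT0res, hT0card⟩ := Nat.sInf_mem hne2
    have hdimeq : dimr G r0 = T0.card := hT0card.symm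
    have hcnt : n ≤ 1 + T0.card * (2 * (r0 * ℓ) + 1) := count_bound hS hT0res
    set R := (r0 : ℝ) with hRdef
    set K := (T0.card : ℝ) with hKdef
    have hR : (0:ℝ) ≤ R := by positivity
    have hK : (0:ℝ) ≤ K := by positivity
    have hthr : (thDim G : ℝ) = R + K := by
      rw [hth, hdimeq]; push_cast; ring
    have hcntR : (n:ℝ) ≤ 1 + K * (2 * (R * L) + 1) := by
      rw [hKdef, hRdef, hLdef]
      exact_mod_cast hcnt
    by_contra hcon
    push_neg at hcon
    rw [hthr] at hcon
    -- hcon : R + K < 1 / (4 * L) * s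
    have h4L : (0:ℝ) < 4 * L := by linarith
    have hcon2 : (R + K) * (4 * L) < s := by
      have h5 := mul_lt_mul_of_pos_right hcon h4L
      have h6 : (1 / (4 * L) * s) * (4 * L) = s := by field_simp
      rw [h6] at h5
      exact h5
    have hA : ((R + K) * (4 * L)) * ((R + K) * (4 * L)) < (n:ℝ) := by
      rw [← hss]
      exact mul_self_lt_mul_self (by positivity) hcon2
    have hK_lt : K < s := by
      have e0 : (0:ℝ) ≤ K * (4 * L - 1) := mul_nonneg hK (by linarith)
      have e1 : K * (4 * L) ≤ (R + K) * (4 * L) :=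
        mul_le_mul_of_nonneg_right (by linarith) (by linarith)
      nlinarith [hcon2]
    have hKR : (0:ℝ) ≤ K * R := mul_nonneg hK hR
    have h2krl : 64 * (K * R) * (L * L) < (n:ℝ) := by
      have e1 : 64 * (K * R) * (L * L)
          = ((R + K) * (4 * L)) * ((R + K) * (4 * L)) - 16 * (L * (K - R))^2 := by ring
      have e2 : (0:ℝ) ≤ 16 * (L * (K - R))^2 := by positivity
      linarith
    have h64 : 64 * K * R * L < (n:ℝ) := by
      have e2 : 64 * K * R * L = 64 * (K * R) * (L * L) - 64 * ((K * R) * (L * (L - 1))) := by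
        ring
      have e3 : (0:ℝ) ≤ (K * R) * (L * (L - 1)) :=
        mul_nonneg hKR (mul_nonneg (by linarith) (by linarith))
      linarith
    have hs_le : 10 * s ≤ (n:ℝ) := by
      have := mul_le_mul_of_nonneg_right hs10 (by linarith : (0:ℝ) ≤ s)
      linarith
    linarith
  · -- upper bound
    have hup := upper_bound hS hℓ hℓ1 hn
    have hupR : (thDim G : ℝ) ≤ ((Nat.sqrt n : ℝ) + 1) * (L + 1) := by
      rw [hLdef]
      exact_mod_cast hup
    have hsq : (Nat.sqrt n : ℝ) ≤ s := by
      rw [hsdef]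
      rw [Real.le_sqrt (by positivity) (by positivity)]
      exact_mod_cast Nat.sqrt_le' n
    have h1s : (1:ℝ) ≤ s := by linarith
    calc (thDim G : ℝ) ≤ ((Nat.sqrt n : ℝ) + 1) * (L + 1) := hupR
      _ ≤ (2 * s) * (L + 1) := by
          apply mul_le_mul_of_nonneg_right (by linarith) (by linarith)
      _ = 2 * (L + 1) * s := by ring
end

section
/- Let G be a finite simple graph on n ≥ 3 vertices. Then th_dim(G) = n − 1 if and only if for every three distinct vertices of G there is a labeling of them as x, y, z such that N(x) \ {y, z} = N(y) \ {x, z}, where N denotes the open neighborhood in G. -/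
open SimpleGraph Filter

namespace Aux11
variable {V : Type*}

/-- `w` adjacency-separates `x` and `y`. -/
def Sep (G : SimpleGraph V) (w x y : V) : Prop :=
  (G.Adj w x ∧ ¬ G.Adj w y) ∨ (G.Adj w y ∧ ¬ G.Adj w x)

/-- `x` and `y` are twins except possibly at `z` (and each other). -/
def Tw (G : SimpleGraph V) (x y z : V) : Prop :=
  ∀ w, w ≠ x → w ≠ y → w ≠ z → (G.Adj w x ↔ G.Adj w y)

def CondC (G : SimpleGraph V) : Prop :=
  ∀ x y z : V, x ≠ y → x ≠ z → y ≠ z → Tw G x y z ∨ Tw G x z y ∨ Tw G y z x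

variable {G : SimpleGraph V}

lemma Sep.symm' {w x y : V} (h : Sep G w x y) : Sep G w y x := h.elim .inr .inl

lemma Tw.symm' {x y z : V} (h : Tw G x y z) : Tw G y x z :=
  fun w h1 h2 h3 => (h w h2 h1 h3).symm

lemma not_sep_of_tw {x y z w : V} (h : Tw G x y z) (h1 : w ≠ x) (h2 : w ≠ y) (h3 : w ≠ z)
    (hs : Sep G w x y) : False := by
  have := h w h1 h2 h3
  rcases hs with ⟨ha, hb⟩ | ⟨ha, hb⟩ <;> tauto

lemma exists_penult {s x : V} (h1 : G.edist s x ≠ ⊤) (h0 : s ≠ x) :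
    ∃ w, G.Adj w x ∧ G.edist s w + 1 = G.edist s x := by
  obtain ⟨p, hp⟩ := SimpleGraph.exists_walk_of_edist_ne_top h1
  have hq : ¬ p.reverse.Nil := by
    rw [SimpleGraph.Walk.nil_iff_length_eq, SimpleGraph.Walk.length_reverse]
    intro hlen
    exact h0 (SimpleGraph.Walk.eq_of_length_eq_zero hlen)
  obtain ⟨w, hadj, q', hq'⟩ := SimpleGraph.Walk.not_nil_iff.mp hq
  refine ⟨w, hadj.symm, ?_⟩
  have hlen : q'.length + 1 = p.length := by
    have := congrArg SimpleGraph.Walk.length hq'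
    rw [SimpleGraph.Walk.length_reverse] at this
    simp [SimpleGraph.Walk.length_cons] at this
    omega
  have h2 : G.edist s w ≤ (q'.length : ℕ∞) := by
    simpa [SimpleGraph.Walk.length_reverse] using SimpleGraph.edist_le q'.reverse
  have h3 : G.edist s x ≤ G.edist s w + 1 := by
    have ht := G.edist_triangle (u := s) (v := w) (w := x)
    rwa [SimpleGraph.edist_eq_one_iff_adj.mpr hadj.symm] at ht
  have h4 : G.edist s w + 1 ≤ G.edist s x := by
    rw [← hp, ← hlen]
    push_cast
    exact add_le_add h2 le_rfl
  exact le_antisymm h4 h3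

/-- The refined separator lemma. -/
lemma sep_detail {r : ℕ} {s x y : V} (hsx : s ≠ x)
    (h : truncDist G r s x < truncDist G r s y) :
    ∃ w, w ≠ x ∧ w ≠ y ∧ G.Adj w x ∧ ¬ G.Adj w y ∧
      G.edist s w + 1 = G.edist s x ∧ G.edist s x ≤ (r : ℕ∞) ∧
      G.edist s x < G.edist s y := by
  have hrtop : ((r : ℕ∞) + 1) ≠ ⊤ := by
    have : ((r : ℕ∞) + 1) = ((r + 1 : ℕ) : ℕ∞) := by push_cast; ring
    rw [this]; exact ENat.coe_ne_top _
  have h1 : truncDist G r s x < (r : ℕ∞) + 1 := lt_of_lt_of_le h (min_le_right _ _)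
  have hex_lt : G.edist s x < (r : ℕ∞) + 1 := by
    by_contra hc
    push_neg at hc
    rw [truncDist, min_eq_right hc] at h1
    exact lt_irrefl _ h1
  have hex_le : G.edist s x ≤ (r : ℕ∞) := (ENat.lt_add_one_iff (ENat.coe_ne_top r)).mp hex_lt
  have htx : truncDist G r s x = G.edist s x := min_eq_left hex_lt.le
  have hlt : G.edist s x < G.edist s y := by
    have := lt_of_lt_of_le (htx ▸ h) (min_le_left _ _)
    exact this
  have hnt : G.edist s x ≠ ⊤ := (lt_of_le_of_lt hex_le (by simp [lt_top_iff_ne_top])).ne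
  obtain ⟨w, hadj, hw⟩ := exists_penult hnt hsx
  have hwx : w ≠ x := hadj.ne
  have hwtop : G.edist s w ≠ ⊤ := by
    intro hc; rw [hc] at hw; simp at hw; exact hnt hw.symm
  have hwlt : G.edist s w < G.edist s x := by
    rw [← hw]; exact ENat.lt_add_one_iff hwtop |>.mpr le_rfl
  have hwy : w ≠ y := by
    rintro rfl
    exact absurd hlt (not_lt.mpr hwlt.le)
  have hnadj : ¬ G.Adj w y := by
    intro hc
    have : G.edist s y ≤ G.edist s w + 1 := by
      have ht := G.edist_triangle (u := s) (v := w) (w := y)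
      rwa [SimpleGraph.edist_eq_one_iff_adj.mpr hc] at ht
    rw [hw] at this
    exact absurd hlt (not_lt.mpr this)
  exact ⟨w, hwx, hwy, hadj, hnadj, hw, hex_le, hlt⟩

end Aux11

namespace Aux11
variable {V : Type*} {G : SimpleGraph V}

lemma edist_ne_zero {s x : V} (h : s ≠ x) : G.edist s x ≠ 0 :=
  fun hc => h (SimpleGraph.edist_eq_zero_iff.mp hc)

/-- Nonempty symmetric difference for pairs of non-landmark vertices. -/
lemma mkNE {r : ℕ} {S : Finset V} (hS : IsDistResolving G r S) {a b : V}
    (ha : a ∉ S) (hb : b ∉ S) (hab : a ≠ b) :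
    ∃ w, w ≠ a ∧ w ≠ b ∧ Sep G w a b := by
  obtain ⟨s, hsS, hne⟩ := hS a b hab
  have hsa : s ≠ a := fun h => ha (h ▸ hsS)
  have hsb : s ≠ b := fun h => hb (h ▸ hsS)
  rcases hne.lt_or_gt with h | h
  · obtain ⟨w, h1, h2, h3, h4, -⟩ := sep_detail hsa h
    exact ⟨w, h1, h2, Or.inl ⟨h3, h4⟩⟩
  · obtain ⟨w, h1, h2, h3, h4, -⟩ := sep_detail hsb h
    exact ⟨w, h2, h1, Or.inr ⟨h3, h4⟩⟩

/-- If `x,y` are twins except `z` and some vertex separates them, then `z` does. -/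
lemma getSep {r : ℕ} {S : Finset V} (hS : IsDistResolving G r S) {a b c : V}
    (ha : a ∉ S) (hb : b ∉ S) (hab : a ≠ b) (htw : Tw G a b c) : Sep G c a b := by
  obtain ⟨w, h1, h2, h3⟩ := mkNE hS ha hb hab
  by_cases hwc : w = c
  · exact hwc ▸ h3
  · exact absurd h3 (fun hs => not_sep_of_tw htw h1 h2 hwc hs)

/-- r = 0 : at most one non-landmark vertex. -/
lemma claimR0 {S : Finset V} (hS : IsDistResolving G 0 S) {a b : V}
    (ha : a ∉ S) (hb : b ∉ S) (hab : a ≠ b) : False := by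
  obtain ⟨s, hsS, hne⟩ := hS a b hab
  have hsa : s ≠ a := fun h => ha (h ▸ hsS)
  have hsb : s ≠ b := fun h => hb (h ▸ hsS)
  apply hne
  have h1 : truncDist G 0 s a = 1 := by
    rw [truncDist]
    have : (1 : ℕ∞) ≤ G.edist s a := ENat.one_le_iff_ne_zero.mpr (edist_ne_zero hsa)
    simpa using min_eq_right this
  have h2 : truncDist G 0 s b = 1 := by
    rw [truncDist]
    have : (1 : ℕ∞) ≤ G.edist s b := ENat.one_le_iff_ne_zero.mpr (edist_ne_zero hsb)
    simpa using min_eq_right this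
  rw [h1, h2]

/-- r = 1 : at most two non-landmark vertices, given condition C. -/
lemma claimR1 (hC : CondC G) {S : Finset V} (hS : IsDistResolving G 1 S) {x y z : V}
    (hx : x ∉ S) (hy : y ∉ S) (hz : z ∉ S)
    (hxy : x ≠ y) (hxz : x ≠ z) (hyz : y ≠ z) : False := by
  -- core: given Tw x y z, derive False
  have core : ∀ a b c : V, a ∉ S → b ∉ S → c ∉ S → a ≠ b → a ≠ c → b ≠ c →
      Tw G a b c → False := by
    intro a b c ha hb hc hab hac hbc htw
    obtain ⟨s, hsS, hne⟩ := hS a b hab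
    have hsa : s ≠ a := fun h => ha (h ▸ hsS)
    have hsb : s ≠ b := fun h => hb (h ▸ hsS)
    have hsc : s ≠ c := fun h => hc (h ▸ hsS)
    have key : ∀ p q : V, s ≠ p → truncDist G 1 s p < truncDist G 1 s q →
        Sep G s p q := by
      intro p q hsp hlt
      obtain ⟨w, h1, h2, h3, h4, h5, h6, -⟩ := sep_detail hsp hlt
      have hws : w = s := by
        have hle : G.edist s w + 1 ≤ (1 : ℕ∞) := h5 ▸ h6
        have h0 : G.edist s w = 0 := by
          by_contra hne0
          have h1le : (1 : ℕ∞) ≤ G.edist s w := ENat.one_le_iff_ne_zero.mpr hne0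
          have h21 : (2 : ℕ∞) ≤ 1 := by
            calc (2 : ℕ∞) = 1 + 1 := by norm_num
              _ ≤ G.edist s w + 1 := add_le_add h1le le_rfl
              _ ≤ 1 := hle
          exact absurd h21 (by decide)
        exact (SimpleGraph.edist_eq_zero_iff.mp h0).symm
      subst hws
      exact Or.inl ⟨h3, h4⟩
    rcases hne.lt_or_gt with h | h
    · exact not_sep_of_tw htw hsa hsb hsc (key a b hsa h)
    · exact not_sep_of_tw htw.symm' hsb hsa hsc (key b a hsb h)
  rcases hC x y z hxy hxz hyz with h | h | h
  · exact core x y z hx hy hz hxy hxz hyz h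
  · exact core x z y hx hz hy hxz hxy hyz.symm h
  · exact core y z x hy hz hx hyz hxy.symm hxz.symm h

end Aux11

namespace Aux11
variable {V : Type*} {G : SimpleGraph V}

lemma lemP_half (hC : CondC G) {S : Finset V} (hS : IsDistResolving G 2 S)
    {p q w s : V} (hp : p ∉ S) (hq : q ∉ S) (hw : w ∉ S) (hsS : s ∈ S)
    (hpq : p ≠ q) (hpw : p ≠ w) (hqw : q ≠ w) (htw : Tw G p q w)
    (hlt : truncDist G 2 s p < truncDist G 2 s q) :
    ∀ v, G.Adj v q → v = p := by
  have hsp : s ≠ p := fun h => hp (h ▸ hsS)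
  have hsq : s ≠ q := fun h => hq (h ▸ hsS)
  have hsw : s ≠ w := fun h => hw (h ▸ hsS)
  obtain ⟨w', h1, h2, h3, h4, h5, h6, h7⟩ := sep_detail hsp hlt
  -- w' = w
  have hww : w' = w := by
    by_contra hne
    exact not_sep_of_tw htw h1 h2 hne (Or.inl ⟨h3, h4⟩)
  subst hww
  -- edist s w' = 1, edist s p = 2
  have hw0 : G.edist s w' ≠ 0 := edist_ne_zero hsw
  have hw1 : (1 : ℕ∞) ≤ G.edist s w' := ENat.one_le_iff_ne_zero.mpr hw0
  have hsp2 : G.edist s p = 2 := by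
    have hle2 : G.edist s p ≤ (2 : ℕ∞) := by exact_mod_cast h6
    have hge2 : (2 : ℕ∞) ≤ G.edist s p := by
      calc (2 : ℕ∞) = 1 + 1 := by norm_num
        _ ≤ G.edist s w' + 1 := add_le_add hw1 le_rfl
        _ = G.edist s p := h5
    exact le_antisymm hle2 hge2
  have hsw1 : G.edist s w' = 1 := by
    have : G.edist s w' + 1 = 2 := by rw [h5, hsp2]
    have h2 : G.edist s w' + 1 = 1 + 1 := by rw [this]; norm_num
    exact WithTop.add_right_cancel WithTop.one_ne_top h2
  have hadjsw : G.Adj s w' := SimpleGraph.edist_eq_one_iff_adj.mp hsw1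
  have hq2 : (2 : ℕ∞) < G.edist s q := hsp2 ▸ h7
  -- condition C on {p, q, s}
  rcases hC p q s hpq hsp.symm hsq.symm with hc | hc | hc
  · -- Tw p q s : contradiction via w'
    exact absurd (Or.inl ⟨h3, h4⟩ : Sep G w' p q)
      (fun hs => not_sep_of_tw hc h1 h2 hsw.symm hs)
  · -- Tw p s q : conclude
    intro n hn
    by_contra hnp
    have hnq : n ≠ q := hn.ne
    have hnw : n ≠ w' := fun h => h4 (h ▸ hn)
    have hns : n ≠ s := by
      rintro rfl
      have h1' : G.edist n q = 1 := SimpleGraph.edist_eq_one_iff_adj.mpr hn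
      rw [h1'] at hq2
      exact absurd hq2 (by decide)
    have hnp' : G.Adj n p := (htw n hnp hnq hnw).mpr hn
    have hns' : G.Adj n s := (hc n hnp hns hnq).mp hnp'
    have : G.edist s q ≤ 2 := by
      calc G.edist s q ≤ G.edist s n + G.edist n q := G.edist_triangle
        _ = 1 + 1 := by
            rw [SimpleGraph.edist_eq_one_iff_adj.mpr hns'.symm,
              SimpleGraph.edist_eq_one_iff_adj.mpr hn]
        _ = 2 := by norm_num
    exact absurd (lt_of_lt_of_le hq2 this) (lt_irrefl _)
  · -- Tw q s p : contradiction via w'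
    have := hc w' h2 hsw.symm h1
    exact (h4 (this.mpr hadjsw.symm)).elim

lemma lemP (hC : CondC G) {S : Finset V} (hS : IsDistResolving G 2 S)
    {p q w' : V} (hp : p ∉ S) (hq : q ∉ S) (hw : w' ∉ S)
    (hpq : p ≠ q) (hpw : p ≠ w') (hqw : q ≠ w') (htw : Tw G p q w') :
    (∀ v, G.Adj v p → v = q) ∨ (∀ v, G.Adj v q → v = p) := by
  obtain ⟨s, hsS, hne⟩ := hS p q hpq
  rcases hne.lt_or_gt with h | h
  · exact Or.inr (lemP_half hC hS hp hq hw hsS hpq hpw hqw htw h)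
  · exact Or.inl (lemP_half hC hS hq hp hw hsS hpq.symm hqw hpw htw.symm' h)

end Aux11

namespace Aux11
variable {V : Type*} {G : SimpleGraph V}

lemma isolated_edist {u s : V} (h : ∀ v, ¬ G.Adj v u) (hs : s ≠ u) : G.edist s u = ⊤ := by
  by_contra hne
  obtain ⟨w, hw, -⟩ := exists_penult hne hs
  exact h w hw

lemma core2A (hC : CondC G) {S : Finset V} (hS : IsDistResolving G 2 S)
    {x y z u : V} (hx : x ∉ S) (hy : y ∉ S) (hz : z ∉ S) (hu : u ∉ S)
    (hxy : x ≠ y) (hxz : x ≠ z) (hyz : y ≠ z) (hxu : x ≠ u) (hyu : y ≠ u) (hzu : z ≠ u)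
    (hTw1 : Tw G x y z) (hSep1 : Sep G z x y)
    (hTw2 : Tw G x u y) (hSep2 : Sep G y x u) : False := by
  rcases lemP hC hS hx hy hz hxy hxz hyz hTw1 with hNx1 | hNy
  · rcases lemP hC hS hx hu hy hxu hxy hyu.symm hTw2 with hNx2 | hNu
    · -- (b, b') : N(x) = ∅
      have hNx : ∀ v, ¬ G.Adj v x := fun v hv => hyu ((hNx1 v hv).symm.trans (hNx2 v hv))
      rcases hSep1 with ⟨hzx, -⟩ | ⟨hzy, hnzx⟩
      · exact hNx z hzx
      rcases hSep2 with ⟨hyx, -⟩ | ⟨hyu', -⟩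
      · exact hNx y hyx
      have hiff := hTw1 u hxu.symm hyu.symm hzu.symm
      exact hNx u (hiff.mpr hyu'.symm)
    · -- (b, a') : the hard case
      rcases hSep2 with ⟨hyx, hnyu⟩ | ⟨hyu', -⟩
      swap
      · exact hxy (hNu y hyu').symm
      rcases hSep1 with ⟨hzx, -⟩ | ⟨hzy, hnzx⟩
      · exact hyz ((hNx1 z hzx).symm) |>.elim
      have hNu0 : ∀ v, ¬ G.Adj v u := by
        intro v hv
        have hvx := hNu v hv
        subst hvx
        exact hyu (hNx1 u hv.symm).symm
      have hNy2 : ∀ v, G.Adj v y → v = x ∨ v = z := by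
        intro v hv
        by_contra hcon
        push_neg at hcon
        have hvy : v ≠ y := hv.ne
        have := hTw1 v hcon.1 hvy hcon.2
        exact hvy (hNx1 v (this.mpr hv))
      obtain ⟨s, hsS, hne⟩ := hS x u hxu
      have hsx : s ≠ x := fun h => hx (h ▸ hsS)
      have hsu : s ≠ u := fun h => hu (h ▸ hsS)
      have hsy : s ≠ y := fun h => hy (h ▸ hsS)
      have hsz : s ≠ z := fun h => hz (h ▸ hsS)
      apply hne
      have h3u : truncDist G 2 s u = 3 := by
        rw [truncDist, isolated_edist hNu0 hsu]
        norm_num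
      have hxge : ¬ (G.edist s x ≤ 2) := by
        intro hle
        have hnt : G.edist s x ≠ ⊤ := fun hc => by rw [hc] at hle; exact absurd hle (by decide)
        obtain ⟨w, hw, h5⟩ := exists_penult hnt hsx
        have hwy : w = y := hNx1 w hw
        rw [hwy] at h5
        have h1le : G.edist s y ≤ 1 := by
          have h2 : G.edist s y + 1 ≤ 2 := h5 ▸ hle
          have hytop : G.edist s y ≠ ⊤ := by
            intro hc; rw [hc] at h2; exact absurd h2 (by simpa using (by decide : ¬ ((⊤:ℕ∞) ≤ 2)))
          have := (ENat.add_one_le_iff hytop).mp h2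
          have h22 : (2 : ℕ∞) = 1 + 1 := by norm_num
          rw [h22] at this
          exact (ENat.lt_add_one_iff (by decide)).mp this
        rcases eq_or_ne (G.edist s y) 0 with h0 | hne0
        · exact hsy (SimpleGraph.edist_eq_zero_iff.mp h0)
        · have h1 : G.edist s y = 1 :=
            le_antisymm h1le (ENat.one_le_iff_ne_zero.mpr hne0)
          have hadj : G.Adj s y := SimpleGraph.edist_eq_one_iff_adj.mp h1
          rcases hNy2 s hadj with h | h
          · exact hsx h
          · exact hsz h
      have h3x : truncDist G 2 s x = 3 := by
        rw [truncDist]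
        have h2lt : (2 : ℕ∞) < G.edist s x := not_le.mp hxge
        have h3le : (3 : ℕ∞) ≤ G.edist s x := by
          have := (ENat.add_one_le_iff (by decide : (2:ℕ∞) ≠ ⊤)).mpr h2lt
          calc (3 : ℕ∞) = 2 + 1 := by norm_num
            _ ≤ G.edist s x := this
        have hcast : ((2 : ℕ) : ℕ∞) + 1 = 3 := by norm_num
        rw [hcast, min_eq_right h3le]
      rw [h3x, h3u]
  · rcases lemP hC hS hx hu hy hxu hxy hyu.symm hTw2 with hNx2 | hNu
    · -- (a, b')
      rcases hSep1 with ⟨hzx, -⟩ | ⟨hzy, -⟩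
      · exact hzu (hNx2 z hzx)
      · exact hxz (hNy z hzy).symm
    · -- (a, a')
      have hTwyu : Tw G y u x := fun w hwy hwu hwx =>
        iff_of_false (fun h => hwx (hNy w h)) (fun h => hwx (hNu w h))
      have hSepyu : Sep G x y u := getSep hS hy hu hyu hTwyu
      rcases lemP hC hS hy hu hx hyu hxy.symm hxu.symm hTwyu with hNy2 | hNu2
      · have hNy0 : ∀ v, ¬ G.Adj v y := fun v hv => hxu ((hNy v hv).symm.trans (hNy2 v hv))
        rcases hSep1 with ⟨hzx, hnzy⟩ | ⟨hzy, -⟩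
        swap
        · exact hNy0 z hzy
        rcases hSep2 with ⟨hyx, -⟩ | ⟨hyu', -⟩
        · exact hNy0 x hyx.symm
        · exact hNy0 u hyu'.symm
      · have hNu0 : ∀ v, ¬ G.Adj v u := fun v hv => hxy ((hNu v hv).symm.trans (hNu2 v hv))
        rcases hSep2 with ⟨hyx, hnyu⟩ | ⟨hyu', -⟩
        swap
        · exact hNu0 y hyu'
        rcases hSep1 with ⟨hzx, hnzy⟩ | ⟨hzy, -⟩
        swap
        · exact hxz (hNy z hzy).symm
        have := hTw2 z hxz.symm hzu hyz.symm
        exact hNu0 z (this.mp hzx)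

end Aux11

namespace Aux11
variable {V : Type*} {G : SimpleGraph V}

lemma core2 (hC : CondC G) {S : Finset V} (hS : IsDistResolving G 2 S)
    {x y z u : V} (hx : x ∉ S) (hy : y ∉ S) (hz : z ∉ S) (hu : u ∉ S)
    (hxy : x ≠ y) (hxz : x ≠ z) (hyz : y ≠ z) (hxu : x ≠ u) (hyu : y ≠ u) (hzu : z ≠ u)
    (hTw1 : Tw G x y z) (hSep1 : Sep G z x y) : False := by
  rcases hC x y u hxy hxu hyu with h | h | h
  · exact not_sep_of_tw h hxz.symm hyz.symm hzu hSep1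
  · exact core2A hC hS hx hy hz hu hxy hxz hyz hxu hyu hzu hTw1 hSep1 h
      (getSep hS hx hu hxu h)
  · exact core2A hC hS hy hx hz hu hxy.symm hyz hxz hyu hxu hzu hTw1.symm' hSep1.symm' h
      (getSep hS hy hu hyu h)

lemma claimR2 (hC : CondC G) {S : Finset V} (hS : IsDistResolving G 2 S)
    {x y z u : V} (hx : x ∉ S) (hy : y ∉ S) (hz : z ∉ S) (hu : u ∉ S)
    (hxy : x ≠ y) (hxz : x ≠ z) (hyz : y ≠ z) (hxu : x ≠ u) (hyu : y ≠ u) (hzu : z ≠ u) :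
    False := by
  rcases hC x y z hxy hxz hyz with h | h | h
  · exact core2 hC hS hx hy hz hu hxy hxz hyz hxu hyu hzu h (getSep hS hx hy hxy h)
  · exact core2 hC hS hx hz hy hu hxz hxy hyz.symm hxu hzu hyu h (getSep hS hx hz hxz h)
  · exact core2 hC hS hy hz hx hu hyz hxy.symm hxz.symm hyu hzu hxu h (getSep hS hy hz hyz h)

section five
variable (hC : CondC G) {r : ℕ} {S : Finset V} (hS : IsDistResolving G r S)

/-- if `D(u,y) ⊆ {x, z}` pattern: any separator of `u,y` is `x` or `z`. -/
lemma sepUY {x y z u w : V} (hTw1 : Tw G x y z) (hTw2 : Tw G x u y)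
    (hwu : w ≠ u) (hwy : w ≠ y) (hsep : Sep G w u y) : w = x ∨ w = z := by
  by_contra hcon
  push_neg at hcon
  have h1 := hTw2 w hcon.1 hwu hwy   -- Adj w x ↔ Adj w u
  have h2 := hTw1 w hcon.1 hwy hcon.2 -- Adj w x ↔ Adj w y
  have := h1.symm.trans h2  -- Adj w u ↔ Adj w y
  rcases hsep with ⟨ha, hb⟩ | ⟨ha, hb⟩ <;> tauto

include hC hS in
lemma alphaCase {x y z u v : V}
    (hx : x ∉ S) (hy : y ∉ S) (hz : z ∉ S) (hu : u ∉ S) (hv : v ∉ S)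
    (hxy : x ≠ y) (hxz : x ≠ z) (hyz : y ≠ z) (hxu : x ≠ u) (hyu : y ≠ u) (hzu : z ≠ u)
    (hxv : x ≠ v) (hyv : y ≠ v) (hzv : z ≠ v) (huv : u ≠ v)
    (hTw1 : Tw G x y z) (hTw2 : Tw G x u y) (hSep2 : Sep G y x u)
    (hTw3 : Tw G x v y) (hSep3 : Sep G y x v) : False := by
  have hTwuv : Tw G u v x := by
    rcases hC u v x huv hxu.symm hxv.symm with h | h | h
    · exact h
    · exact absurd hSep2 (fun hs => not_sep_of_tw h hyu hxy.symm hyv hs.symm')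
    · exact absurd hSep3 (fun hs => not_sep_of_tw h hyv hxy.symm hyu hs.symm')
  have hSepuv : Sep G x u v := getSep hS hu hv huv hTwuv
  rcases hC u v y huv hyu.symm hyv.symm with h | h | h
  · exact not_sep_of_tw h hxu hxv hxy hSepuv
  · -- Tw u y v
    obtain ⟨w, hwu, hwy, hsep⟩ := mkNE hS hu hy hyu.symm
    rcases sepUY hTw1 hTw2 hwu hwy hsep with rfl | rfl
    · exact not_sep_of_tw h hwu hwy hxv hsep
    · exact not_sep_of_tw h hwu hwy hzv hsep
  · -- Tw v y u
    obtain ⟨w, hwv, hwy, hsep⟩ := mkNE hS hv hy hyv.symm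
    rcases sepUY hTw1 hTw3 hwv hwy hsep with rfl | rfl
    · exact not_sep_of_tw h hwv hwy hxu hsep
    · exact not_sep_of_tw h hwv hwy hzu hsep

include hC hS in
lemma betaCase {x y z u v : V}
    (hx : x ∉ S) (hy : y ∉ S) (hz : z ∉ S) (hu : u ∉ S) (hv : v ∉ S)
    (hxy : x ≠ y) (hxz : x ≠ z) (hyz : y ≠ z) (hxu : x ≠ u) (hyu : y ≠ u) (hzu : z ≠ u)
    (hxv : x ≠ v) (hyv : y ≠ v) (hzv : z ≠ v) (huv : u ≠ v)
    (hTw1 : Tw G x y z) (hTw2 : Tw G x u y) (hSep2 : Sep G y x u)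
    (hTw3 : Tw G y v x) (hSep3 : Sep G x y v) : False := by
  -- any separator of x,v is y or z
  have sepXV : ∀ w, w ≠ x → w ≠ v → Sep G w x v → w = y ∨ w = z := by
    intro w hwx hwv hsep
    by_contra hcon
    push_neg at hcon
    have h1 := hTw3 w hcon.1 hwv hwx   -- Adj w y ↔ Adj w v
    have h2 := hTw1 w hwx hcon.1 hcon.2 -- Adj w x ↔ Adj w y
    have := h2.trans h1
    rcases hsep with ⟨ha, hb⟩ | ⟨ha, hb⟩ <;> tauto
  have hTwuv : Tw G u v x := by
    rcases hC u v x huv hxu.symm hxv.symm with h | h | h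
    · exact h
    · exact absurd hSep2 (fun hs => not_sep_of_tw h hyu hxy.symm hyv hs.symm')
    · -- Tw v x u : contradiction via separator of x,v
      obtain ⟨w, hwx, hwv, hsep⟩ := mkNE hS hx hv hxv
      rcases sepXV w hwx hwv hsep with rfl | rfl
      · exact (not_sep_of_tw h hwv hwx hyu hsep.symm').elim
      · exact (not_sep_of_tw h hwv hwx hzu hsep.symm').elim
  have hSepuv : Sep G x u v := getSep hS hu hv huv hTwuv
  rcases hC u v y huv hyu.symm hyv.symm with h | h | h
  · exact not_sep_of_tw h hxu hxv hxy hSepuv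
  · -- Tw u y v
    obtain ⟨w, hwu, hwy, hsep⟩ := mkNE hS hu hy hyu.symm
    rcases sepUY hTw1 hTw2 hwu hwy hsep with rfl | rfl
    · exact not_sep_of_tw h hwu hwy hxv hsep
    · exact not_sep_of_tw h hwu hwy hzv hsep
  · -- Tw v y u : any separator of v,y is x
    obtain ⟨w, hwv, hwy, hsep⟩ := mkNE hS hv hy hyv.symm
    have hwx : w = x := by
      by_contra hwx
      exact not_sep_of_tw hTw3 hwy hwv hwx hsep.symm'
    subst hwx
    exact not_sep_of_tw h hwv hwy hxu hsep

include hC hS in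
lemma core3 {x y z u v : V}
    (hx : x ∉ S) (hy : y ∉ S) (hz : z ∉ S) (hu : u ∉ S) (hv : v ∉ S)
    (hxy : x ≠ y) (hxz : x ≠ z) (hyz : y ≠ z) (hxu : x ≠ u) (hyu : y ≠ u) (hzu : z ≠ u)
    (hxv : x ≠ v) (hyv : y ≠ v) (hzv : z ≠ v) (huv : u ≠ v)
    (hTw1 : Tw G x y z) (hSep1 : Sep G z x y) : False := by
  have hcaseU : Tw G x u y ∨ Tw G y u x := by
    rcases hC x y u hxy hxu hyu with h | h | h
    · exact absurd hSep1 (fun hs => not_sep_of_tw h hxz.symm hyz.symm hzu hs)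
    · exact Or.inl h
    · exact Or.inr h
  have hcaseV : Tw G x v y ∨ Tw G y v x := by
    rcases hC x y v hxy hxv hyv with h | h | h
    · exact absurd hSep1 (fun hs => not_sep_of_tw h hxz.symm hyz.symm hzv hs)
    · exact Or.inl h
    · exact Or.inr h
  rcases hcaseU with hU | hU <;> rcases hcaseV with hV | hV
  · exact alphaCase hC hS hx hy hz hu hv hxy hxz hyz hxu hyu hzu hxv hyv hzv huv
      hTw1 hU (getSep hS hx hu hxu hU) hV (getSep hS hx hv hxv hV)
  · exact betaCase hC hS hx hy hz hu hv hxy hxz hyz hxu hyu hzu hxv hyv hzv huv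
      hTw1 hU (getSep hS hx hu hxu hU) hV (getSep hS hy hv hyv hV)
  · exact betaCase hC hS hx hy hz hv hu hxy hxz hyz hxv hyv hzv hxu hyu hzu huv.symm
      hTw1 hV (getSep hS hx hv hxv hV) hU (getSep hS hy hu hyu hU)
  · exact alphaCase hC hS hy hx hz hu hv hxy.symm hyz hxz hyu hxu hzu hyv hxv hzv huv
      hTw1.symm' hU (getSep hS hy hu hyu hU) hV (getSep hS hy hv hyv hV)

include hC hS in
lemma claimGen {x y z u v : V}
    (hx : x ∉ S) (hy : y ∉ S) (hz : z ∉ S) (hu : u ∉ S) (hv : v ∉ S)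
    (hxy : x ≠ y) (hxz : x ≠ z) (hyz : y ≠ z) (hxu : x ≠ u) (hyu : y ≠ u) (hzu : z ≠ u)
    (hxv : x ≠ v) (hyv : y ≠ v) (hzv : z ≠ v) (huv : u ≠ v) : False := by
  rcases hC x y z hxy hxz hyz with h | h | h
  · exact core3 hC hS hx hy hz hu hv hxy hxz hyz hxu hyu hzu hxv hyv hzv huv h
      (getSep hS hx hy hxy h)
  · exact core3 hC hS hx hz hy hu hv hxz hxy hyz.symm hxu hzu hyu hxv hzv hyv huv h
      (getSep hS hx hz hxz h)
  · exact core3 hC hS hy hz hx hu hv hyz hxy.symm hxz.symm hyu hzu hxu hyv hzv hxv huv h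
      (getSep hS hy hz hyz h)

end five
end Aux11

namespace Aux11
variable {V : Type*} {G : SimpleGraph V}

lemma condIff {a b c : V} (hab : a ≠ b) (hac : a ≠ c) (hbc : b ≠ c) :
    (G.neighborSet a \ {b, c} = G.neighborSet b \ {a, c}) ↔ Tw G a b c := by
  constructor
  · intro h w hwa hwb hwc
    have hmem := Set.ext_iff.mp h w
    simp only [Set.mem_diff, SimpleGraph.mem_neighborSet, Set.mem_insert_iff,
      Set.mem_singleton_iff, not_or] at hmem
    constructor
    · intro hw
      exact ((hmem.mp ⟨hw.symm, hwb, hwc⟩).1).symm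
    · intro hw
      exact ((hmem.mpr ⟨hw.symm, hwa, hwc⟩).1).symm
  · intro h
    ext w
    simp only [Set.mem_diff, SimpleGraph.mem_neighborSet, Set.mem_insert_iff,
      Set.mem_singleton_iff, not_or]
    constructor
    · rintro ⟨h1, h2, h3⟩
      have hwa : w ≠ a := by rintro rfl; exact G.irrefl h1
      exact ⟨((h w hwa h2 h3).mp h1.symm).symm, hwa, h3⟩
    · rintro ⟨h1, h2, h3⟩
      have hwb : w ≠ b := by rintro rfl; exact G.irrefl h1
      exact ⟨((h w h2 hwb h3).mpr h1.symm).symm, hwb, h3⟩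

lemma trunc_eq_zero_iff {r : ℕ} {v x : V} : truncDist G r v x = 0 ↔ v = x := by
  rw [truncDist]
  constructor
  · intro h
    rcases min_eq_iff.mp h with ⟨h1, -⟩ | ⟨h1, -⟩
    · exact SimpleGraph.edist_eq_zero_iff.mp h1
    · exfalso
      have : ((r : ℕ∞) + 1) ≠ 0 := by
        simp [add_eq_zero]
      exact this h1
  · rintro rfl
    simp [SimpleGraph.edist_self]

lemma self_resolves {r : ℕ} {p q : V} (hpq : p ≠ q) :
    truncDist G r p p ≠ truncDist G r p q := by
  rw [trunc_eq_zero_iff.mpr rfl]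
  exact fun h => hpq (trunc_eq_zero_iff.mp h.symm)

lemma univ_resolving [Fintype V] (r : ℕ) : IsDistResolving G r (Finset.univ : Finset V) :=
  fun x _ hxy => ⟨x, Finset.mem_univ x, self_resolves hxy⟩

lemma trunc_one_of_adj {w p : V} (h : G.Adj w p) : truncDist G 1 w p = 1 := by
  rw [truncDist, SimpleGraph.edist_eq_one_iff_adj.mpr h]
  have : (1 : ℕ∞) ≤ (1 : ℕ) + 1 := by norm_num
  exact min_eq_left this

lemma trunc_two_of_not_adj {w p : V} (hne : w ≠ p) (h : ¬ G.Adj w p) :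
    truncDist G 1 w p = 2 := by
  rw [truncDist]
  have h0 : G.edist w p ≠ 0 := edist_ne_zero hne
  have h1 : G.edist w p ≠ 1 := fun hc => h (SimpleGraph.edist_eq_one_iff_adj.mp hc)
  have h2 : (2 : ℕ∞) ≤ G.edist w p := by
    have hge1 : (1 : ℕ∞) ≤ G.edist w p := ENat.one_le_iff_ne_zero.mpr h0
    have : (1 : ℕ∞) < G.edist w p := lt_of_le_of_ne hge1 (Ne.symm h1)
    calc (2 : ℕ∞) = 1 + 1 := by norm_num
      _ ≤ G.edist w p := (ENat.add_one_le_iff (by decide)).mpr this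
  have hcast : ((1 : ℕ) : ℕ∞) + 1 = 2 := by norm_num
  rw [hcast, min_eq_right h2]

/-- Extraction lemmas. -/
lemma ex2 {T : Finset V} (h : 2 ≤ T.card) :
    ∃ a b, a ∈ T ∧ b ∈ T ∧ a ≠ b := by
  have hpos : 0 < T.card := by omega
  obtain ⟨a, ha⟩ := Finset.card_pos.mp hpos
  classical
  have h1 : 1 ≤ (T.erase a).card := by
    rw [Finset.card_erase_of_mem ha]; omega
  obtain ⟨b, hb⟩ := Finset.card_pos.mp (lt_of_lt_of_le one_pos h1)
  exact ⟨a, b, ha, Finset.mem_of_mem_erase hb, (Finset.ne_of_mem_erase hb).symm⟩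

lemma ex3 {T : Finset V} (h : 3 ≤ T.card) :
    ∃ a b c, a ∈ T ∧ b ∈ T ∧ c ∈ T ∧ a ≠ b ∧ a ≠ c ∧ b ≠ c := by
  have hpos : 0 < T.card := by omega
  obtain ⟨a, ha⟩ := Finset.card_pos.mp hpos
  classical
  have h1 : 2 ≤ (T.erase a).card := by
    rw [Finset.card_erase_of_mem ha]; omega
  obtain ⟨b, c, hb, hc, hbc⟩ := ex2 h1
  exact ⟨a, b, c, ha, Finset.mem_of_mem_erase hb, Finset.mem_of_mem_erase hc,
    (Finset.ne_of_mem_erase hb).symm, (Finset.ne_of_mem_erase hc).symm, hbc⟩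

lemma ex4 {T : Finset V} (h : 4 ≤ T.card) :
    ∃ a b c d, a ∈ T ∧ b ∈ T ∧ c ∈ T ∧ d ∈ T ∧
      a ≠ b ∧ a ≠ c ∧ a ≠ d ∧ b ≠ c ∧ b ≠ d ∧ c ≠ d := by
  have hpos : 0 < T.card := by omega
  obtain ⟨a, ha⟩ := Finset.card_pos.mp hpos
  classical
  have h1 : 3 ≤ (T.erase a).card := by
    rw [Finset.card_erase_of_mem ha]; omega
  obtain ⟨b, c, d, hb, hc, hd, hbc, hbd, hcd⟩ := ex3 h1
  exact ⟨a, b, c, d, ha, Finset.mem_of_mem_erase hb, Finset.mem_of_mem_erase hc,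
    Finset.mem_of_mem_erase hd,
    (Finset.ne_of_mem_erase hb).symm, (Finset.ne_of_mem_erase hc).symm,
    (Finset.ne_of_mem_erase hd).symm, hbc, hbd, hcd⟩

lemma ex5 {T : Finset V} (h : 5 ≤ T.card) :
    ∃ a b c d e, a ∈ T ∧ b ∈ T ∧ c ∈ T ∧ d ∈ T ∧ e ∈ T ∧
      a ≠ b ∧ a ≠ c ∧ a ≠ d ∧ a ≠ e ∧ b ≠ c ∧ b ≠ d ∧ b ≠ e ∧ c ≠ d ∧ c ≠ e ∧ d ≠ e := by
  have hpos : 0 < T.card := by omega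
  obtain ⟨a, ha⟩ := Finset.card_pos.mp hpos
  classical
  have h1 : 4 ≤ (T.erase a).card := by
    rw [Finset.card_erase_of_mem ha]; omega
  obtain ⟨b, c, d, e, hb, hc, hd, he, hbc, hbd, hbe, hcd, hce, hde⟩ := ex4 h1
  exact ⟨a, b, c, d, e, ha, Finset.mem_of_mem_erase hb, Finset.mem_of_mem_erase hc,
    Finset.mem_of_mem_erase hd, Finset.mem_of_mem_erase he,
    (Finset.ne_of_mem_erase hb).symm, (Finset.ne_of_mem_erase hc).symm,
    (Finset.ne_of_mem_erase hd).symm, (Finset.ne_of_mem_erase he).symm,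
    hbc, hbd, hbe, hcd, hce, hde⟩

/-- Lower bound for the size of a resolving set under condition C. -/
lemma card_bound [Fintype V] (hC : CondC G) {r : ℕ} {S : Finset V}
    (hS : IsDistResolving G r S) : Fintype.card V ≤ S.card + min r 3 + 1 := by
  classical
  by_contra hcon
  push_neg at hcon
  have hTcard : min r 3 + 2 ≤ Sᶜ.card := by
    rw [Finset.card_compl]
    have := Finset.card_le_univ S
    omega
  have hmem : ∀ a, a ∈ Sᶜ → a ∉ S := fun a ha => Finset.mem_compl.mp ha
  rcases r with _ | _ | _ | n
  · obtain ⟨a, b, ha, hb, hab⟩ := ex2 (T := Sᶜ) (by omega)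
    exact claimR0 hS (hmem a ha) (hmem b hb) hab
  · obtain ⟨a, b, c, ha, hb, hc, hab, hac, hbc⟩ := ex3 (T := Sᶜ) (by omega)
    exact claimR1 hC hS (hmem a ha) (hmem b hb) (hmem c hc) hab hac hbc
  · obtain ⟨a, b, c, d, ha, hb, hc, hd, h1, h2, h3, h4, h5, h6⟩ := ex4 (T := Sᶜ) (by omega)
    exact claimR2 hC hS (hmem a ha) (hmem b hb) (hmem c hc) (hmem d hd) h1 h2 h4 h3 h5 h6
  · obtain ⟨a, b, c, d, e, ha, hb, hc, hd, he, h1, h2, h3, h4, h5, h6, h7, h8, h9, h10⟩ :=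
      ex5 (T := Sᶜ) (by omega)
    exact claimGen hC hS (hmem a ha) (hmem b hb) (hmem c hc) (hmem d hd) (hmem e he)
      h1 h2 h5 h3 h6 h8 h4 h7 h9 h10

end Aux11

namespace Aux11
variable {V : Type*} {G : SimpleGraph V}

lemma not_tw {a b c : V} (h : ¬ Tw G a b c) :
    ∃ w, w ≠ a ∧ w ≠ b ∧ w ≠ c ∧ Sep G w a b := by
  unfold Tw at h
  push_neg at h
  obtain ⟨w, h1, h2, h3, hiff⟩ := h
  exact ⟨w, h1, h2, h3, hiff.imp (fun h => h) (fun h => ⟨h.2, h.1⟩)⟩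

lemma sep_resolves {w p q : V} (hwp : w ≠ p) (hwq : w ≠ q) (hs : Sep G w p q) :
    truncDist G 1 w p ≠ truncDist G 1 w q := by
  rcases hs with ⟨ha, hb⟩ | ⟨ha, hb⟩
  · rw [trunc_one_of_adj ha, trunc_two_of_not_adj hwq hb]
    decide
  · rw [trunc_one_of_adj ha, trunc_two_of_not_adj hwp hb]
    decide

variable [Fintype V]

lemma dimr_set_nonempty (G : SimpleGraph V) (r : ℕ) :
    {k | ∃ S : Finset V, IsDistResolving G r S ∧ S.card = k}.Nonempty :=
  ⟨(Finset.univ : Finset V).card, Finset.univ, univ_resolving r, rfl⟩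

lemma dimr_spec (G : SimpleGraph V) (r : ℕ) :
    ∃ S : Finset V, IsDistResolving G r S ∧ S.card = dimr G r :=
  Nat.sInf_mem (dimr_set_nonempty G r)

lemma dimr_le {r k : ℕ} (S : Finset V) (h : IsDistResolving G r S) (hc : S.card = k) :
    dimr G r ≤ k :=
  Nat.sInf_le ⟨S, h, hc⟩

lemma erase_resolving [DecidableEq V] (G : SimpleGraph V) (x0 : V) :
    IsDistResolving G 0 (Finset.univ.erase x0) := by
  intro p q hpq
  by_cases hp : p = x0
  · subst hp
    exact ⟨q, Finset.mem_erase.mpr ⟨hpq.symm, Finset.mem_univ q⟩,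
      Ne.symm (self_resolves hpq.symm)⟩
  · exact ⟨p, Finset.mem_erase.mpr ⟨hp, Finset.mem_univ p⟩, self_resolves hpq⟩

end Aux11

/-- For a graph `G` on `n ≥ 3` vertices, `th_dim(G) = n - 1` iff for
every three distinct vertices there is a labeling `x, y, z` of them with
`N(x) \ {y,z} = N(y) \ {x,z}`. -/
theorem stmt11 {V : Type*} [Fintype V] (G : SimpleGraph V)
    (h3 : 3 ≤ Fintype.card V) :
    thDim G = Fintype.card V - 1 ↔
      ∀ x y z : V, x ≠ y → x ≠ z → y ≠ z →
        (G.neighborSet x \ {y, z} = G.neighborSet y \ {x, z}) ∨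
        (G.neighborSet x \ {z, y} = G.neighborSet z \ {x, y}) ∨
        (G.neighborSet y \ {z, x} = G.neighborSet z \ {y, x}) := by
  classical
  obtain ⟨x0⟩ : Nonempty V := Fintype.card_pos_iff.mp (by omega)
  have hdim0le : dimr G 0 ≤ Fintype.card V - 1 :=
    Aux11.dimr_le _ (Aux11.erase_resolving G x0)
      (by rw [Finset.card_erase_of_mem (Finset.mem_univ x0), Finset.card_univ])
  have hthle0 : thDim G ≤ 0 + dimr G 0 := Nat.sInf_le ⟨0, rfl⟩
  constructor
  · intro hth x y z hxy hxz hyz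
    by_contra hcon
    push_neg at hcon
    obtain ⟨h1, h2, h3'⟩ := hcon
    have hntw1 : ¬ Aux11.Tw G x y z := fun h => h1 ((Aux11.condIff hxy hxz hyz).mpr h)
    have hntw2 : ¬ Aux11.Tw G x z y := fun h => h2 ((Aux11.condIff hxz hxy hyz.symm).mpr h)
    have hntw3 : ¬ Aux11.Tw G y z x := fun h => h3' ((Aux11.condIff hyz hxy.symm hxz.symm).mpr h)
    obtain ⟨w1, hw1x, hw1y, hw1z, hs1⟩ := Aux11.not_tw hntw1
    obtain ⟨w2, hw2x, hw2z, hw2y, hs2⟩ := Aux11.not_tw hntw2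
    obtain ⟨w3, hw3y, hw3z, hw3x, hs3⟩ := Aux11.not_tw hntw3
    set S : Finset V := Finset.univ \ {x, y, z} with hSdef
    have hmemS : ∀ w : V, w ≠ x → w ≠ y → w ≠ z → w ∈ S := by
      intro w hwx hwy hwz
      simp [hSdef, hwx, hwy, hwz]
    have hSres : IsDistResolving G 1 S := by
      intro p q hpq
      by_cases hp : p ≠ x ∧ p ≠ y ∧ p ≠ z
      · exact ⟨p, hmemS p hp.1 hp.2.1 hp.2.2, Aux11.self_resolves hpq⟩
      by_cases hq : q ≠ x ∧ q ≠ y ∧ q ≠ z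
      · exact ⟨q, hmemS q hq.1 hq.2.1 hq.2.2, Ne.symm (Aux11.self_resolves hpq.symm)⟩
      push_neg at hp hq
      have hp' : p = x ∨ p = y ∨ p = z := by tauto
      have hq' : q = x ∨ q = y ∨ q = z := by tauto
      rcases hp' with rfl | rfl | rfl <;> rcases hq' with rfl | rfl | rfl
      · exact absurd rfl hpq
      · exact ⟨w1, hmemS w1 hw1x hw1y hw1z, Aux11.sep_resolves hw1x hw1y hs1⟩
      · exact ⟨w2, hmemS w2 hw2x hw2y hw2z, Aux11.sep_resolves hw2x hw2z hs2⟩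
      · exact ⟨w1, hmemS w1 hw1x hw1y hw1z, Aux11.sep_resolves hw1y hw1x hs1.symm'⟩
      · exact absurd rfl hpq
      · exact ⟨w3, hmemS w3 hw3x hw3y hw3z, Aux11.sep_resolves hw3y hw3z hs3⟩
      · exact ⟨w2, hmemS w2 hw2x hw2y hw2z, Aux11.sep_resolves hw2z hw2x hs2.symm'⟩
      · exact ⟨w3, hmemS w3 hw3x hw3y hw3z, Aux11.sep_resolves hw3z hw3y hs3.symm'⟩
      · exact absurd rfl hpq
    have hcard3 : ({x, y, z} : Finset V).card = 3 := by
      rw [Finset.card_insert_of_notMem (by simp [hxy, hxz]),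
        Finset.card_insert_of_notMem (by simp [hyz]), Finset.card_singleton]
    have hScard : S.card = Fintype.card V - 3 := by
      rw [hSdef, Finset.card_sdiff_of_subset (Finset.subset_univ _), Finset.card_univ, hcard3]
    have hdim1 : dimr G 1 ≤ Fintype.card V - 3 := Aux11.dimr_le S hSres hScard
    have hthle1 : thDim G ≤ 1 + dimr G 1 := Nat.sInf_le ⟨1, rfl⟩
    omega
  · intro hcond
    have hC : Aux11.CondC G := by
      intro a b c hab hac hbc
      rcases hcond a b c hab hac hbc with h | h | h
      · exact Or.inl ((Aux11.condIff hab hac hbc).mp h)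
      · exact Or.inr (Or.inl ((Aux11.condIff hac hab hbc.symm).mp h))
      · exact Or.inr (Or.inr ((Aux11.condIff hbc hab.symm hac.symm).mp h))
    have hlow : Fintype.card V - 1 ≤ thDim G := by
      have hsetne : {m | ∃ r : ℕ, m = r + dimr G r}.Nonempty := ⟨0 + dimr G 0, 0, rfl⟩
      apply le_csInf hsetne
      rintro m ⟨r, rfl⟩
      obtain ⟨S, hSres, hScard⟩ := Aux11.dimr_spec G r
      have hcb := Aux11.card_bound hC hSres
      have hminr : min r 3 ≤ r := min_le_left _ _
      omega
    omega
end

section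
/- For all positive integers s and t, the edge metric dimension throttling number of the complete bipartite graph K_{s,t} satisfies th_edim(K_{s,t}) = s + t − 2. -/
open SimpleGraph Filter

section Aux

open Finset Sum

variable {s t : ℕ}

private lemma K_adj_lr (i : Fin s) (j : Fin t) :
    (completeBipartiteGraph (Fin s) (Fin t)).Adj (Sum.inl i) (Sum.inr j) := by
  simp [completeBipartiteGraph]

private lemma edgeEDist_mk {V : Type*} (G : SimpleGraph V) (a b v : V) :
    edgeEDist G s(a, b) v = min (G.edist a v) (G.edist b v) := rfl

private lemma edgeForm {e : Sym2 (Fin s ⊕ Fin t)}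
    (he : e ∈ (completeBipartiteGraph (Fin s) (Fin t)).edgeSet) :
    ∃ i j, e = s(Sum.inl i, Sum.inr j) := by
  induction e using Sym2.ind with
  | _ a b =>
    rw [SimpleGraph.mem_edgeSet] at he
    rcases a with i | j <;> rcases b with i' | j'
    · simp [completeBipartiteGraph] at he
    · exact ⟨i, j', rfl⟩
    · exact ⟨i', j, Sym2.eq_swap⟩
    · simp [completeBipartiteGraph] at he

private lemma edgeEDist_eq_zero {V : Type*} (G : SimpleGraph V) {e : Sym2 V} {v : V}
    (hv : v ∈ e) : edgeEDist G e v = 0 := by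
  induction e using Sym2.ind with
  | _ a b =>
    rw [Sym2.mem_iff] at hv
    rcases hv with rfl | rfl <;>
      simp [edgeEDist_mk, SimpleGraph.edist_self]

private lemma edgeEDist_eq_one {i : Fin s} {j : Fin t} {v : Fin s ⊕ Fin t}
    (hv : v ∉ (s(Sum.inl i, Sum.inr j) : Sym2 (Fin s ⊕ Fin t))) :
    edgeEDist (completeBipartiteGraph (Fin s) (Fin t)) s(Sum.inl i, Sum.inr j) v = 1 := by
  rw [Sym2.mem_iff] at hv
  push_neg at hv
  obtain ⟨h1, h2⟩ := hv
  rw [edgeEDist_mk]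
  rcases v with i' | j'
  · have hb : (completeBipartiteGraph (Fin s) (Fin t)).edist (Sum.inr j) (Sum.inl i') = 1 :=
      SimpleGraph.edist_eq_one_iff_adj.mpr ((K_adj_lr i' j).symm)
    have ha : 1 ≤ (completeBipartiteGraph (Fin s) (Fin t)).edist (Sum.inl i) (Sum.inl i') :=
      ENat.one_le_iff_ne_zero.mpr (fun h =>
        (Ne.symm h1) (SimpleGraph.edist_eq_zero_iff.mp h))
    rw [hb]
    exact min_eq_right ha
  · have hb : (completeBipartiteGraph (Fin s) (Fin t)).edist (Sum.inl i) (Sum.inr j') = 1 :=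
      SimpleGraph.edist_eq_one_iff_adj.mpr (K_adj_lr i j')
    have ha : 1 ≤ (completeBipartiteGraph (Fin s) (Fin t)).edist (Sum.inr j) (Sum.inr j') :=
      ENat.one_le_iff_ne_zero.mpr (fun h =>
        (Ne.symm h2) (SimpleGraph.edist_eq_zero_iff.mp h))
    rw [hb]
    exact min_eq_left ha

private lemma truncEdgeDist_eq (r : ℕ) (i : Fin s) (j : Fin t) (v : Fin s ⊕ Fin t) :
    truncEdgeDist (completeBipartiteGraph (Fin s) (Fin t)) r s(Sum.inl i, Sum.inr j) v =
      if v ∈ (s(Sum.inl i, Sum.inr j) : Sym2 (Fin s ⊕ Fin t)) then 0 else 1 := by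
  by_cases hv : v ∈ (s(Sum.inl i, Sum.inr j) : Sym2 (Fin s ⊕ Fin t))
  · simp [truncEdgeDist, edgeEDist_eq_zero _ hv, hv]
  · have h1 : (1 : ℕ∞) ≤ (r : ℕ∞) + 1 := le_add_self
    simp [truncEdgeDist, edgeEDist_eq_one hv, hv, min_eq_left h1]

private lemma lower_bound (hs : 1 ≤ s) (ht : 1 ≤ t) (r : ℕ) (S : Finset (Fin s ⊕ Fin t))
    (hS : IsEdgeResolving (completeBipartiteGraph (Fin s) (Fin t)) r S) :
    s + t - 2 ≤ S.card := by
  classical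
  set i0 : Fin s := ⟨0, hs⟩ with hi0
  set j0 : Fin t := ⟨0, ht⟩ with hj0
  have claimL : ∀ i i' : Fin s, Sum.inl i ∉ S → Sum.inl i' ∉ S → i = i' := by
    intro i i' hi hi'
    by_contra hne
    have he : (s(Sum.inl i, Sum.inr j0) : Sym2 (Fin s ⊕ Fin t)) ∈
        (completeBipartiteGraph (Fin s) (Fin t)).edgeSet := K_adj_lr i j0
    have hf : (s(Sum.inl i', Sum.inr j0) : Sym2 (Fin s ⊕ Fin t)) ∈
        (completeBipartiteGraph (Fin s) (Fin t)).edgeSet := K_adj_lr i' j0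
    have hef : (s(Sum.inl i, Sum.inr j0) : Sym2 (Fin s ⊕ Fin t)) ≠ s(Sum.inl i', Sum.inr j0) := by
      simp [Sym2.eq_iff, hne]
    obtain ⟨v, hvS, hv⟩ := hS _ he _ hf hef
    rw [truncEdgeDist_eq, truncEdgeDist_eq] at hv
    have h1 : v ≠ Sum.inl i := fun h => hi (h ▸ hvS)
    have h2 : v ≠ Sum.inl i' := fun h => hi' (h ▸ hvS)
    simp [Sym2.mem_iff, h1, h2] at hv
  have claimR : ∀ j j' : Fin t, Sum.inr j ∉ S → Sum.inr j' ∉ S → j = j' := by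
    intro j j' hj hj'
    by_contra hne
    have he : (s(Sum.inl i0, Sum.inr j) : Sym2 (Fin s ⊕ Fin t)) ∈
        (completeBipartiteGraph (Fin s) (Fin t)).edgeSet := K_adj_lr i0 j
    have hf : (s(Sum.inl i0, Sum.inr j') : Sym2 (Fin s ⊕ Fin t)) ∈
        (completeBipartiteGraph (Fin s) (Fin t)).edgeSet := K_adj_lr i0 j'
    have hef : (s(Sum.inl i0, Sum.inr j) : Sym2 (Fin s ⊕ Fin t)) ≠ s(Sum.inl i0, Sum.inr j') := by
      simp [Sym2.eq_iff, hne]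
    obtain ⟨v, hvS, hv⟩ := hS _ he _ hf hef
    rw [truncEdgeDist_eq, truncEdgeDist_eq] at hv
    have h1 : v ≠ Sum.inr j := fun h => hj (h ▸ hvS)
    have h2 : v ≠ Sum.inr j' := fun h => hj' (h ▸ hvS)
    simp [Sym2.mem_iff, h1, h2] at hv
  have cardL : s - 1 ≤ (univ.filter fun i : Fin s => Sum.inl i ∈ S).card := by
    have h1 : (univ.filter fun i : Fin s => ¬ Sum.inl i ∈ S).card ≤ 1 :=
      Finset.card_le_one.mpr (by
        intro a ha b hb
        simp only [Finset.mem_filter, Finset.mem_univ, true_and] at ha hb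
        exact claimL a b ha hb)
    have h2 := Finset.card_filter_add_card_filter_not
      (s := (univ : Finset (Fin s))) (p := fun i : Fin s => Sum.inl i ∈ S)
    simp only [Finset.card_univ, Fintype.card_fin] at h2
    omega
  have cardR : t - 1 ≤ (univ.filter fun j : Fin t => Sum.inr j ∈ S).card := by
    have h1 : (univ.filter fun j : Fin t => ¬ Sum.inr j ∈ S).card ≤ 1 :=
      Finset.card_le_one.mpr (by
        intro a ha b hb
        simp only [Finset.mem_filter, Finset.mem_univ, true_and] at ha hb
        exact claimR a b ha hb)
    have h2 := Finset.card_filter_add_card_filter_not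
      (s := (univ : Finset (Fin t))) (p := fun j : Fin t => Sum.inr j ∈ S)
    simp only [Finset.card_univ, Fintype.card_fin] at h2
    omega
  have hdisj : Disjoint ((univ.filter fun i : Fin s => Sum.inl i ∈ S).image Sum.inl)
      ((univ.filter fun j : Fin t => Sum.inr j ∈ S).image Sum.inr) := by
    simp [Finset.disjoint_left]
  have hsub : ((univ.filter fun i : Fin s => Sum.inl i ∈ S).image Sum.inl ∪
      (univ.filter fun j : Fin t => Sum.inr j ∈ S).image Sum.inr) ⊆ S := by
    intro v hv
    simp only [Finset.mem_union, Finset.mem_image, Finset.mem_filter, Finset.mem_univ,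
      true_and] at hv
    rcases hv with ⟨i, hi, rfl⟩ | ⟨j, hj, rfl⟩ <;> assumption
  have hcard := Finset.card_le_card hsub
  rw [Finset.card_union_of_disjoint hdisj,
    Finset.card_image_of_injective _ Sum.inl_injective,
    Finset.card_image_of_injective _ Sum.inr_injective] at hcard
  omega

private lemma upper_set (hs : 1 ≤ s) (ht : 1 ≤ t) (r : ℕ) :
    IsEdgeResolving (completeBipartiteGraph (Fin s) (Fin t)) r
      (((univ : Finset (Fin s)).erase ⟨0, hs⟩).image Sum.inl ∪
        ((univ : Finset (Fin t)).erase ⟨0, ht⟩).image Sum.inr) := by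
  classical
  set i0 : Fin s := ⟨0, hs⟩ with hi0
  set j0 : Fin t := ⟨0, ht⟩ with hj0
  intro e he f hf hef
  obtain ⟨i, j, rfl⟩ := edgeForm he
  obtain ⟨i', j', rfl⟩ := edgeForm hf
  have hmem : ∀ v : Fin s ⊕ Fin t,
      (∃ a : Fin s, a ≠ i0 ∧ v = Sum.inl a) ∨ (∃ b : Fin t, b ≠ j0 ∧ v = Sum.inr b) →
      v ∈ (((univ : Finset (Fin s)).erase i0).image Sum.inl ∪
        ((univ : Finset (Fin t)).erase j0).image Sum.inr) := by
    intro v hv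
    simp only [Finset.mem_union, Finset.mem_image, Finset.mem_erase, Finset.mem_univ, and_true]
    rcases hv with ⟨a, ha, rfl⟩ | ⟨b, hb, rfl⟩
    · exact Or.inl ⟨a, ha, rfl⟩
    · exact Or.inr ⟨b, hb, rfl⟩
  by_cases hii : i = i'
  · subst hii
    have hjj : j ≠ j' := by
      intro h; exact hef (by rw [h])
    by_cases hj : j = j0
    · refine ⟨Sum.inr j', hmem _ (Or.inr ⟨j', by rintro rfl; exact hjj hj, rfl⟩), ?_⟩
      rw [truncEdgeDist_eq, truncEdgeDist_eq]
      simp [Sym2.mem_iff, Ne.symm hjj]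
    · refine ⟨Sum.inr j, hmem _ (Or.inr ⟨j, hj, rfl⟩), ?_⟩
      rw [truncEdgeDist_eq, truncEdgeDist_eq]
      simp [Sym2.mem_iff, hjj]
  · by_cases hi : i = i0
    · have hi' : i' ≠ i0 := by rintro rfl; exact hii hi
      refine ⟨Sum.inl i', hmem _ (Or.inl ⟨i', hi', rfl⟩), ?_⟩
      rw [truncEdgeDist_eq, truncEdgeDist_eq]
      simp [Sym2.mem_iff, Ne.symm hii]
    · refine ⟨Sum.inl i, hmem _ (Or.inl ⟨i, hi, rfl⟩), ?_⟩
      rw [truncEdgeDist_eq, truncEdgeDist_eq]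
      simp [Sym2.mem_iff, hii]

private lemma card_S0 (hs : 1 ≤ s) (ht : 1 ≤ t) :
    ((((univ : Finset (Fin s)).erase ⟨0, hs⟩).image Sum.inl ∪
      ((univ : Finset (Fin t)).erase ⟨0, ht⟩).image Sum.inr)).card = s + t - 2 := by
  classical
  have hdisj : Disjoint (((univ : Finset (Fin s)).erase ⟨0, hs⟩).image Sum.inl)
      (((univ : Finset (Fin t)).erase ⟨0, ht⟩).image Sum.inr) := by
    simp [Finset.disjoint_left]
  rw [Finset.card_union_of_disjoint hdisj,
    Finset.card_image_of_injective _ Sum.inl_injective,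
    Finset.card_image_of_injective _ Sum.inr_injective,
    Finset.card_erase_of_mem (Finset.mem_univ _),
    Finset.card_erase_of_mem (Finset.mem_univ _)]
  simp only [Finset.card_univ, Fintype.card_fin]
  omega

private lemma edimr_eq (hs : 1 ≤ s) (ht : 1 ≤ t) (r : ℕ) :
    edimr (completeBipartiteGraph (Fin s) (Fin t)) r = s + t - 2 := by
  apply le_antisymm
  · exact Nat.sInf_le ⟨_, upper_set hs ht r, card_S0 hs ht⟩
  · refine le_csInf ⟨_, _, upper_set hs ht r, rfl⟩ ?_
    rintro k ⟨S, hS, rfl⟩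
    exact lower_bound hs ht r S hS

end Aux

/-- For all positive integers `s, t`,
`th_edim(K_{s,t}) = s + t - 2`. -/

theorem stmt13 (s t : ℕ) (hs : 1 ≤ s) (ht : 1 ≤ t) :
    thEdim (completeBipartiteGraph (Fin s) (Fin t)) = s + t - 2 := by
  have key : ∀ r : ℕ, edimr (completeBipartiteGraph (Fin s) (Fin t)) r = s + t - 2 :=
    edimr_eq hs ht
  apply le_antisymm
  · exact Nat.sInf_le ⟨0, by rw [key 0, Nat.zero_add]⟩
  · refine le_csInf ⟨_, 0, rfl⟩ ?_
    rintro m ⟨r, rfl⟩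
    rw [key r]
    omega
end

section
/- For all positive integers n, the edge metric dimension throttling number of the complete graph K_n equals 0 if n ≤ 2, and equals n − 1 if n > 2. -/
open SimpleGraph Filter

section Aux

open Finset

lemma myTruncEdge {n : ℕ} (r : ℕ) (a b v : Fin n) :
    truncEdgeDist (completeGraph (Fin n)) r s(a, b) v = if v = a ∨ v = b then 0 else 1 := by
  classical
  rw [completeGraph_eq_top]
  simp only [truncEdgeDist, edgeEDist, Sym2.lift_mk, SimpleGraph.edist_top]
  have h1 : (1 : ℕ∞) ≤ (r : ℕ∞) + 1 := le_add_self
  by_cases ha : a = v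
  · subst ha; simp
  · by_cases hb : b = v
    · subst hb; simp [ha]
    · rw [if_neg ha, if_neg hb, if_neg (by tauto), min_self, min_eq_left h1]

lemma myWitness {n : ℕ} (a b c d i0 : Fin n) (hab : a ≠ b) (hcd : c ≠ d)
    (hef : s(a, b) ≠ s(c, d)) :
    ∃ v : Fin n, v ≠ i0 ∧ ¬((v = a ∨ v = b) ↔ (v = c ∨ v = d)) := by
  classical
  set A : Finset (Fin n) := {a, b} with hA
  set B : Finset (Fin n) := {c, d} with hB
  have hAcard : A.card = 2 := Finset.card_pair hab
  have hBcard : B.card = 2 := Finset.card_pair hcd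
  have hAB : A ≠ B := by
    intro h
    apply hef
    have hc : c = a ∨ c = b := by
      have : c ∈ A := h ▸ (by simp [hB])
      simpa [hA] using this
    have hd : d = a ∨ d = b := by
      have : d ∈ A := h ▸ (by simp [hB])
      simpa [hA] using this
    rw [Sym2.eq_iff]
    rcases hc with hc | hc <;> rcases hd with hd | hd <;> subst hc <;> subst hd <;> tauto
  have hpA : (A \ B).Nonempty := by
    rw [Finset.sdiff_nonempty]
    intro hsub
    exact hAB (Finset.eq_of_subset_of_card_le hsub (by omega))
  have hqB : (B \ A).Nonempty := by
    rw [Finset.sdiff_nonempty]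
    intro hsub
    exact hAB (Finset.eq_of_subset_of_card_le hsub (by omega)).symm
  obtain ⟨p, hp⟩ := hpA
  obtain ⟨q, hq⟩ := hqB
  rw [Finset.mem_sdiff] at hp hq
  have hmemA : ∀ v : Fin n, v ∈ A ↔ (v = a ∨ v = b) := by intro v; simp [hA]
  have hmemB : ∀ v : Fin n, v ∈ B ↔ (v = c ∨ v = d) := by intro v; simp [hB]
  by_cases hpi : p = i0
  · refine ⟨q, ?_, ?_⟩
    · intro h; subst hpi; rw [h] at hq; exact hq.2 hp.1
    · rw [← hmemA, ← hmemB]; tauto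
  · refine ⟨p, hpi, ?_⟩
    rw [← hmemA, ← hmemB]; tauto

lemma myResolvingErase {n : ℕ} (hn : 3 ≤ n) (r : ℕ) (i0 : Fin n) :
    IsEdgeResolving (completeGraph (Fin n)) r (Finset.univ.erase i0) := by
  classical
  intro e he f hf hef
  induction e using Sym2.ind with
  | _ a b =>
  induction f using Sym2.ind with
  | _ c d =>
  rw [completeGraph_eq_top, SimpleGraph.mem_edgeSet, SimpleGraph.top_adj] at he hf
  obtain ⟨v, hvi, hv⟩ := myWitness a b c d i0 he hf hef
  refine ⟨v, Finset.mem_erase.2 ⟨hvi, Finset.mem_univ v⟩, ?_⟩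
  rw [myTruncEdge, myTruncEdge]
  by_cases h1 : v = a ∨ v = b <;> by_cases h2 : v = c ∨ v = d <;>
    simp [h1, h2] at hv ⊢

lemma myResolvingCard {n : ℕ} (hn : 3 ≤ n) (r : ℕ) (S : Finset (Fin n))
    (hS : IsEdgeResolving (completeGraph (Fin n)) r S) : n - 1 ≤ S.card := by
  classical
  by_contra hlt
  push_neg at hlt
  have hcompl : 1 < Sᶜ.card := by
    rw [Finset.card_compl, Fintype.card_fin]
    omega
  obtain ⟨x, hx, y, hy, hxy⟩ := Finset.one_lt_card.1 hcompl
  have hz : (({x, y} : Finset (Fin n))ᶜ).Nonempty := by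
    rw [← Finset.card_pos, Finset.card_compl, Fintype.card_fin]
    have : ({x, y} : Finset (Fin n)).card ≤ 2 := Finset.card_insert_le _ _ |>.trans (by simp)
    omega
  obtain ⟨z, hzmem⟩ := hz
  rw [Finset.mem_compl, Finset.mem_insert, Finset.mem_singleton] at hzmem
  push_neg at hzmem
  obtain ⟨hzx, hzy⟩ := hzmem
  have he : s(z, x) ∈ (completeGraph (Fin n)).edgeSet := by
    rw [completeGraph_eq_top, SimpleGraph.mem_edgeSet, SimpleGraph.top_adj]; exact hzx
  have hf : s(z, y) ∈ (completeGraph (Fin n)).edgeSet := by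
    rw [completeGraph_eq_top, SimpleGraph.mem_edgeSet, SimpleGraph.top_adj]; exact hzy
  have hef : s(z, x) ≠ s(z, y) := by
    rw [Ne, Sym2.eq_iff]
    push_neg
    constructor
    · intro _; exact hxy
    · intro hzy'; exact absurd hzy' hzy
  obtain ⟨v, hvS, hvne⟩ := hS _ he _ hf hef
  have hvx : v ≠ x := fun h => (Finset.mem_compl.1 hx) (h ▸ hvS)
  have hvy : v ≠ y := fun h => (Finset.mem_compl.1 hy) (h ▸ hvS)
  rw [myTruncEdge, myTruncEdge] at hvne
  by_cases hvz : v = z <;> simp [hvz, hvx, hvy] at hvne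

lemma myEdimr {n : ℕ} (hn : 3 ≤ n) (r : ℕ) :
    edimr (completeGraph (Fin n)) r = n - 1 := by
  classical
  have hmem : n - 1 ∈ {k | ∃ S : Finset (Fin n),
      IsEdgeResolving (completeGraph (Fin n)) r S ∧ S.card = k} := by
    refine ⟨Finset.univ.erase (⟨0, by omega⟩ : Fin n), myResolvingErase hn r _, ?_⟩
    rw [Finset.card_erase_of_mem (Finset.mem_univ _), Finset.card_univ, Fintype.card_fin]
  refine le_antisymm (Nat.sInf_le hmem) (le_csInf ⟨_, hmem⟩ ?_)
  rintro k ⟨S, hS, rfl⟩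
  exact myResolvingCard hn r S hS

lemma mySmall {n : ℕ} (hn2 : n ≤ 2) :
    IsEdgeResolving (completeGraph (Fin n)) 0 (∅ : Finset (Fin n)) := by
  intro e he f hf hef
  exfalso
  apply hef
  induction e using Sym2.ind with
  | _ a b =>
  induction f using Sym2.ind with
  | _ c d =>
  rw [completeGraph_eq_top, SimpleGraph.mem_edgeSet, SimpleGraph.top_adj] at he hf
  have hab : a.val ≠ b.val := fun h => he (Fin.ext h)
  have hcd : c.val ≠ d.val := fun h => hf (Fin.ext h)
  have ha := a.isLt; have hb := b.isLt; have hc := c.isLt; have hd := d.isLt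
  rw [Sym2.eq_iff]
  have : (a.val = c.val ∧ b.val = d.val) ∨ (a.val = d.val ∧ b.val = c.val) := by omega
  rcases this with ⟨h1, h2⟩ | ⟨h1, h2⟩
  · exact Or.inl ⟨Fin.ext h1, Fin.ext h2⟩
  · exact Or.inr ⟨Fin.ext h1, Fin.ext h2⟩

end Aux

/-- `th_edim(K_n) = 0` if `n ≤ 2` and `th_edim(K_n) = n - 1` if
`n > 2`. -/
theorem stmt14 (n : ℕ) (hn : 1 ≤ n) :
    thEdim (completeGraph (Fin n)) = if n ≤ 2 then 0 else n - 1 := by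
  classical
  split
  · rename_i hle
    apply Nat.sInf_eq_zero.2
    refine Or.inl ⟨0, ?_⟩
    have h0 : edimr (completeGraph (Fin n)) 0 = 0 :=
      Nat.sInf_eq_zero.2 (Or.inl ⟨∅, mySmall hle, rfl⟩)
    rw [h0]
  · rename_i hgt
    push_neg at hgt
    have hn3 : 3 ≤ n := hgt
    have hmem : n - 1 ∈ {m | ∃ r : ℕ, m = r + edimr (completeGraph (Fin n)) r} :=
      ⟨0, by rw [myEdimr hn3 0]; omega⟩
    refine le_antisymm (Nat.sInf_le hmem) (le_csInf ⟨_, hmem⟩ ?_)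
    rintro m ⟨r, rfl⟩
    rw [myEdimr hn3 r]
    omega
end
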